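/- arXiv:2101.08357 — 7 statements merged into one kernel-verified Lean document; each statement's English description precedes it below -/
import Mathlib

section
/- Let V be a complex Hilbert space and let T, Q be bounded selfadjoint operators on V with Q nonnegative. Then for every z ∈ ℂ with Re z ≤ 0 and every u ∈ V one has ‖(z(I + iT) − Q)u‖ ≥ |z|·‖u‖. -/
/-- Let `V` be a complex Hilbert space and `T, Q` bounded selfadjoint
operators on `V` with `Q` nonnegative. Then for every `z ∈ ℂ` with `Re z ≤ 0` and every
`u ∈ V` one has `‖(z(I + iT) − Q)u‖ ≥ |z|·‖u‖`. -/
theorem norm_lower_bound_of_selfAdjoint_nonneg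
    {V : Type*} [NormedAddCommGroup V] [InnerProductSpace ℂ V] [CompleteSpace V]
    (T Q : V →L[ℂ] V) (hT : IsSelfAdjoint T) (hQ : IsSelfAdjoint Q)
    (hQnn : ∀ u : V, 0 ≤ (inner ℂ u (Q u) : ℂ).re)
    (z : ℂ) (hz : z.re ≤ 0) (u : V) :
    ‖z‖ * ‖u‖ ≤ ‖(z • ((1 : V →L[ℂ] V) + Complex.I • T) - Q) u‖ := by
  set w : V := (z • ((1 : V →L[ℂ] V) + Complex.I • T) - Q) u with hw
  have hwdef : w = z • u + (z * Complex.I) • T u - Q u := by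
    simp [hw, ContinuousLinearMap.sub_apply, ContinuousLinearMap.add_apply,
      ContinuousLinearMap.smul_apply, smul_smul, smul_add]
  set t : ℂ := inner ℂ u (T u) with htdef
  set q : ℂ := inner ℂ u (Q u) with hqdef
  have hinner : (inner ℂ u w : ℂ) = z * (‖u‖ : ℂ)^2 + (z * Complex.I) * t - q := by
    rw [hwdef]
    simp [inner_sub_right, inner_add_right, inner_smul_right, htdef, hqdef,
      inner_self_eq_norm_sq_to_K]
  have htim : t.im = 0 := by
    have h1 : (starRingEnd ℂ) t = t := by
      rw [htdef, inner_conj_symm]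
      exact hT.isSymmetric u u
    have := congrArg Complex.im h1
    simp [Complex.conj_im] at this
    linarith
  have hqim : q.im = 0 := by
    have h1 : (starRingEnd ℂ) q = q := by
      rw [hqdef, inner_conj_symm]
      exact hQ.isSymmetric u u
    have := congrArg Complex.im h1
    simp [Complex.conj_im] at this
    linarith
  have hqre : 0 ≤ q.re := hQnn u
  -- key real-part estimate
  have hkey : (‖z‖)^2 * ‖u‖^2 ≤ ((starRingEnd ℂ) z * inner ℂ u w).re := by
    rw [hinner]
    have habs : (‖z‖)^2 = z.re^2 + z.im^2 := by
      rw [Complex.sq_norm, Complex.normSq_apply]; ring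
    simp [Complex.mul_re, Complex.mul_im, Complex.add_re, Complex.sub_re,
      Complex.conj_re, Complex.conj_im, Complex.I_re, Complex.I_im, Complex.ofReal_re,
      Complex.ofReal_im, htim, hqim, habs, ← Complex.ofReal_pow]
    nlinarith [sq_nonneg (‖u‖ : ℝ), mul_nonneg (neg_nonneg.mpr hz) hqre]
  have hbound : ((starRingEnd ℂ) z * inner ℂ u w).re ≤ ‖z‖ * (‖u‖ * ‖w‖) := by
    calc ((starRingEnd ℂ) z * inner ℂ u w).re ≤ ‖(starRingEnd ℂ) z * inner ℂ u w‖ :=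
          Complex.re_le_norm _
      _ = ‖z‖ * ‖inner ℂ u w‖ := by
          rw [norm_mul, Complex.norm_conj]
      _ ≤ ‖z‖ * (‖u‖ * ‖w‖) := by
          have := norm_inner_le_norm (𝕜 := ℂ) u w
          exact mul_le_mul_of_nonneg_left this (norm_nonneg z)
  have hfin : (‖z‖)^2 * ‖u‖^2 ≤ ‖z‖ * (‖u‖ * ‖w‖) :=
    le_trans hkey hbound
  rcases eq_or_lt_of_le (mul_nonneg (norm_nonneg z) (norm_nonneg u)) with h0 | hpos
  · rw [← h0]; exact norm_nonneg w
  · nlinarith [norm_nonneg w]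
end

section
/- Let V be a complex Hilbert space, T, Q bounded selfadjoint operators on V with Q nonnegative, and set A := Q(I + iT)⁻¹. Then A is sectorial of angle strictly less than π/2: there exists θ ∈ (0, π/2) such that the spectrum of A is contained in the closed sector Σ_θ, and for every θ' ∈ (θ, π) one has sup{‖z(zI − A)⁻¹‖ : z ∈ ℂ \ Σ_{θ'}, z ≠ 0} < ∞. -/
private lemma lt_of_sq_lt (a b : ℝ) (ha : 0 ≤ a) (h : a^2 < b^2) (hb : 0 ≤ b) : a < b := by
  by_contra hc
  push_neg at hc
  nlinarith

private lemma caseA (c s q x y : ℝ) (hc2 : c^2 ≤ 1) (hq : 0 ≤ q) (hre : x - s*y ≤ 0) :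
    c^2*(x^2+y^2) ≤ (x - s*y - q)^2 + (y + s*x)^2 := by
  nlinarith [mul_nonneg hq (neg_nonneg.mpr hre), sq_nonneg q,
    mul_nonneg (sq_nonneg s) (add_nonneg (sq_nonneg x) (sq_nonneg y)),
    mul_nonneg (sub_nonneg.mpr hc2) (add_nonneg (sq_nonneg x) (sq_nonneg y))]

private lemma stepB1 (c d r s x y : ℝ) (hd2 : d^2 = 1+s^2-c^2) (hr2 : r^2 = x^2+y^2)
    (hcon : (y+s*x)^2 < c^2*r^2) : (d*r)^2 < (x-s*y)^2 := by
  have e1 : (d*r)^2 = (1+s^2)*r^2 - c^2*r^2 := by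
    have : (d*r)^2 = d^2*r^2 := by ring
    rw [this, hd2]; ring
  have e2 : (x-s*y)^2 = (1+s^2)*r^2 - (y+s*x)^2 := by rw [hr2]; ring
  linarith

private lemma stepB2 (su c d : ℝ) (hsu0 : 0 ≤ su) (hd0 : 0 ≤ d) (hsu1 : 1 ≤ su)
    (hsu2 : su^2 = u) (hd2 : d^2 = u - c^2) : su - c^2 ≤ d := by
  nlinarith [sq_nonneg (su - d)]

private lemma stepB3key (k L m su : ℝ) (hL1 : 1 ≤ L) (hk : k*L < 1)
    (hm : m = 1 - max k 0 * L) (hsu1 : 1 ≤ su) (hsuL : su ≤ L) :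
    k * su^2 ≤ su - m := by
  rcases le_or_gt k 0 with h | h
  · have hmeq : m = 1 := by rw [hm, max_eq_right h]; ring
    nlinarith [mul_nonpos_of_nonpos_of_nonneg h (show (0:ℝ) ≤ su^2 by positivity)]
  · have hmeq : m = 1 - k * L := by rw [hm, max_eq_left h.le]
    have h2 : 0 ≤ 1 - k * L := by linarith
    have h1 : 1 - k * L ≤ 1 - k * su := by nlinarith
    have h3 : 1 * (1 - k * su) ≤ su * (1 - k * su) := by nlinarith
    nlinarith

private lemma sq_le_self'' (a : ℝ) (h0 : 0 ≤ a) (h1 : a ≤ 1) : a^2 ≤ a := by nlinarith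

private lemma one_le_of_sq' (a : ℝ) (h0 : 0 ≤ a) (h2 : 1 ≤ a^2) : 1 ≤ a := by nlinarith

private lemma le_of_sq_le_sq' (a b : ℝ) (ha : 0 ≤ a) (hb : 0 ≤ b) (h : a^2 ≤ b^2) : a ≤ b := by
  nlinarith

private lemma caseB (τ k L m c s q x y r su d : ℝ)
    (hτ : 0 ≤ τ) (hs1 : -τ ≤ s) (hs2 : s ≤ τ)
    (hL2 : L^2 = 1 + τ^2) (hL0 : 0 ≤ L) (hL1 : 1 ≤ L) (hk : k*L < 1)
    (hm : m = 1 - max k 0 * L)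
    (hcm : c*(1+τ) = m) (hc0 : 0 < c) (hc1 : c ≤ 1)
    (hq : 0 ≤ q)
    (hr0 : 0 ≤ r) (hr2 : r^2 = x^2+y^2) (hrpos : 0 < r)
    (hsu0 : 0 ≤ su) (hsu2 : su^2 = 1 + s^2)
    (hd0 : 0 ≤ d) (hd2 : d^2 = 1 + s^2 - c^2)
    (hre : 0 < x - s*y)
    (hx : x < k*r)
    (hcon : (y+s*x)^2 < c^2*r^2) : False := by
  have hs2' : s^2 ≤ τ^2 := sq_le_sq' hs1 hs2
  have hsu1 : 1 ≤ su := one_le_of_sq' su hsu0 (by rw [hsu2]; linarith [sq_nonneg s])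
  have hsuL : su ≤ L := le_of_sq_le_sq' su L hsu0 hL0 (by rw [hsu2, hL2]; linarith)
  have hc2c : c^2 ≤ c := sq_le_self'' c hc0.le hc1
  have hwre : d * r < x - s*y :=
    lt_of_sq_lt (d*r) (x - s*y) (mul_nonneg hd0 hr0)
      (stepB1 c d r s x y hd2 hr2 hcon) hre.le
  have hwim : |y + s*x| < c * r := by
    refine lt_of_sq_lt _ _ (abs_nonneg _) ?_ (mul_nonneg hc0.le hr0)
    rw [sq_abs]; exact hcon.trans_le (le_of_eq (by ring))
  have hswim : -(τ * (c * r)) ≤ s * (y + s*x) := by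
    have h1 : |s * (y + s*x)| ≤ τ * (c*r) := by
      rw [abs_mul]
      exact mul_le_mul (abs_le.mpr ⟨hs1, hs2⟩) hwim.le (abs_nonneg _) hτ
    have := neg_abs_le (s * (y + s*x))
    linarith
  have hdsu : su - c^2 ≤ d := stepB2 su c d hsu0 hd0 hsu1 hsu2 hd2
  have hxu : x * (1 + s^2) = (x - s*y) + s * (y + s*x) := by ring
  have hx_lb : (su - m) * r < x * (1 + s^2) := by
    rw [hxu]
    have h6 : c^2*r ≤ c*r := mul_le_mul_of_nonneg_right hc2c hr0
    have h7 : m*r = c*r + τ*(c*r) := by rw [← hcm]; ring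
    have h5 : (su - c^2) * r ≤ d * r := mul_le_mul_of_nonneg_right hdsu hr0
    nlinarith [h5, h6, h7, hwre, hswim]
  have hkey : k * (1 + s^2) ≤ su - m := by
    have := stepB3key k L m su hL1 hk hm hsu1 hsuL
    rwa [hsu2] at this
  have hfin : k * ((1 + s^2) * r) < x * (1 + s^2) :=
    calc k * ((1 + s^2) * r) = (k * (1 + s^2)) * r := by ring
    _ ≤ (su - m) * r := mul_le_mul_of_nonneg_right hkey hr0
    _ < x * (1 + s^2) := hx_lb
  have hupos : (0:ℝ) < 1 + s^2 := by positivity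
  have := mul_lt_mul_of_pos_right hx hupos
  nlinarith [hfin, this]

lemma key_ineq (τ k : ℝ) (hτ : 0 ≤ τ) (hk : k * Real.sqrt (1 + τ^2) < 1) :
    ∃ c : ℝ, 0 < c ∧ c ≤ 1 ∧ ∀ x y s q : ℝ, |s| ≤ τ → 0 ≤ q →
      x < k * Real.sqrt (x^2 + y^2) →
      c^2 * (x^2 + y^2) ≤ (x - s*y - q)^2 + (y + s*x)^2 := by
  set L : ℝ := Real.sqrt (1 + τ^2) with hLdef
  have hL0 : 0 ≤ L := Real.sqrt_nonneg _
  have hL2 : L^2 = 1 + τ^2 := Real.sq_sqrt (by positivity)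
  clear_value L
  have hL1 : 1 ≤ L := by nlinarith
  set m : ℝ := 1 - max k 0 * L with hm
  have hm0 : 0 < m := by
    rcases le_or_gt k 0 with h | h
    · rw [hm, max_eq_right h]; simp
    · rw [hm, max_eq_left h.le]; linarith
  have hm1 : m ≤ 1 := by
    have : 0 ≤ max k 0 * L := mul_nonneg (le_max_right _ _) hL0
    linarith
  set c : ℝ := m / (1 + τ) with hc
  have hc0 : 0 < c := div_pos hm0 (by linarith)
  have hc1 : c ≤ 1 := by rw [hc, div_le_one (by linarith)]; linarith
  have hcm : c * (1 + τ) = m := by rw [hc]; exact div_mul_cancel₀ m (ne_of_gt (by linarith))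
  clear_value m c
  refine ⟨c, hc0, hc1, ?_⟩
  have hc2 : c^2 ≤ 1 := (sq_le_self'' c hc0.le hc1).trans hc1
  intro x y s q hs hq hx
  obtain ⟨hs1, hs2⟩ := abs_le.mp hs
  set r : ℝ := Real.sqrt (x^2 + y^2) with hrdef
  have hr0 : 0 ≤ r := Real.sqrt_nonneg _
  have hr2 : r^2 = x^2 + y^2 := Real.sq_sqrt (by positivity)
  clear_value r
  have hrpos : 0 < r := by
    rcases hr0.lt_or_eq with h | h
    · exact h
    · exfalso
      have hx0 : x = 0 := by nlinarith [sq_nonneg x, sq_nonneg y]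
      rw [hx0, ← h] at hx
      simp at hx
  rcases le_or_gt (x - s*y) 0 with hre | hre
  · exact caseA c s q x y hc2 hq hre
  · have hgoal : c^2 * r^2 ≤ (y + s*x)^2 := by
      by_contra hcon
      push_neg at hcon
      exact caseB τ k L m c s q x y r (Real.sqrt (1+s^2)) (Real.sqrt (1+s^2-c^2))
        hτ hs1 hs2 hL2 hL0 hL1 hk hm hcm hc0 hc1 hq hr0 hr2 hrpos
        (Real.sqrt_nonneg _) (Real.sq_sqrt (by positivity))
        (Real.sqrt_nonneg _) (Real.sq_sqrt (by nlinarith)) hre hx hcon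
    calc c^2 * (x^2 + y^2) = c^2 * r^2 := by rw [hr2]
    _ ≤ (y + s*x)^2 := hgoal
    _ ≤ (x - s*y - q)^2 + (y + s*x)^2 := by nlinarith [sq_nonneg (x - s*y - q)]

lemma isUnit_of_inner_lb
    {V : Type*} [NormedAddCommGroup V] [InnerProductSpace ℂ V] [CompleteSpace V]
    (B : V →L[ℂ] V) (c : ℝ) (hc : 0 < c)
    (h : ∀ u : V, c * ‖u‖^2 ≤ ‖(inner ℂ u (B u) : ℂ)‖) :
    IsUnit B ∧ ‖Ring.inverse B‖ ≤ 1/c := by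
  have hlb : ∀ u : V, c * ‖u‖ ≤ ‖B u‖ := by
    intro u
    rcases eq_or_ne u 0 with rfl | hu
    · simp
    · have h1 : c * ‖u‖^2 ≤ ‖(inner ℂ u (B u) : ℂ)‖ := h u
      have h2 : ‖(inner ℂ u (B u) : ℂ)‖ ≤ ‖u‖ * ‖B u‖ := norm_inner_le_norm u (B u)
      have hu0 : 0 < ‖u‖ := norm_pos_iff.mpr hu
      have := h1.trans h2
      rw [pow_two] at this
      nlinarith
  have hadj : ∀ u : V, c * ‖u‖^2 ≤ ‖(inner ℂ u ((ContinuousLinearMap.adjoint B) u) : ℂ)‖ := by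
    intro u
    have e1 : (inner ℂ u ((ContinuousLinearMap.adjoint B) u) : ℂ) =
        starRingEnd ℂ (inner ℂ u (B u)) := by
      rw [← inner_conj_symm, ContinuousLinearMap.adjoint_inner_left]
    rw [e1, RCLike.norm_conj]
    exact h u
  have hlbadj : ∀ u : V, c * ‖u‖ ≤ ‖(ContinuousLinearMap.adjoint B) u‖ := by
    intro u
    rcases eq_or_ne u 0 with rfl | hu
    · simp
    · have h1 := hadj u
      have h2 : ‖(inner ℂ u ((ContinuousLinearMap.adjoint B) u) : ℂ)‖
          ≤ ‖u‖ * ‖(ContinuousLinearMap.adjoint B) u‖ := norm_inner_le_norm _ _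
      have hu0 : 0 < ‖u‖ := norm_pos_iff.mpr hu
      have := h1.trans h2
      rw [pow_two] at this
      nlinarith
  have hanti : AntilipschitzWith (Real.toNNReal c)⁻¹ B := by
    apply ContinuousLinearMap.antilipschitz_of_bound
    intro x
    rw [NNReal.coe_inv, Real.coe_toNNReal _ hc.le, inv_mul_eq_div, le_div_iff₀ hc, mul_comm]
    exact hlb x
  have hinj : LinearMap.ker (B : V →ₗ[ℂ] V) = ⊥ := LinearMap.ker_eq_bot.mpr hanti.injective
  have hclosed : IsClosed (Set.range B) := hanti.isClosed_range B.uniformContinuous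
  have hclosedS : IsClosed ((LinearMap.range (B : V →ₗ[ℂ] V) : Submodule ℂ V) : Set V) := by
    rw [LinearMap.coe_range]; exact hclosed
  haveI : CompleteSpace (LinearMap.range (B : V →ₗ[ℂ] V) : Submodule ℂ V) := hclosedS.completeSpace_coe
  have horth : (LinearMap.range (B : V →ₗ[ℂ] V) : Submodule ℂ V)ᗮ = ⊥ := by
    rw [Submodule.eq_bot_iff]
    intro v hv
    have hBv : (ContinuousLinearMap.adjoint B) v = 0 := by
      have h1 : (inner ℂ ((ContinuousLinearMap.adjoint B) v)
          ((ContinuousLinearMap.adjoint B) v) : ℂ) = 0 := by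
        rw [ContinuousLinearMap.adjoint_inner_left]
        rw [← inner_conj_symm]
        have h0 : (inner ℂ (B ((ContinuousLinearMap.adjoint B) v)) v : ℂ) = 0 :=
          (Submodule.mem_orthogonal _ v).mp hv _ (LinearMap.mem_range_self _ _)
        rw [h0]; simp
      exact inner_self_eq_zero.mp h1
    have h3 := hlbadj v
    rw [hBv, norm_zero] at h3
    have h4 : ‖v‖ ≤ 0 := by nlinarith
    exact norm_le_zero_iff.mp h4
  have hrange : LinearMap.range (B : V →ₗ[ℂ] V) = ⊤ := Submodule.orthogonal_eq_bot_iff.mp horth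
  let e : V ≃L[ℂ] V := ContinuousLinearEquiv.ofBijective B hinj hrange
  have heB : (e : V →L[ℂ] V) = B := by
    ext v; rfl
  have hmul1 : B * (e.symm : V →L[ℂ] V) = 1 := by
    ext v
    simp only [ContinuousLinearMap.mul_apply, ContinuousLinearMap.one_apply,
      ContinuousLinearMap.coe_coe]
    rw [← heB]
    simp
  have hmul2 : (e.symm : V →L[ℂ] V) * B = 1 := by
    ext v
    simp only [ContinuousLinearMap.mul_apply, ContinuousLinearMap.one_apply,
      ContinuousLinearMap.coe_coe]
    rw [← heB]
    simp
  refine ⟨⟨⟨B, (e.symm : V →L[ℂ] V), hmul1, hmul2⟩, rfl⟩, ?_⟩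
  have hinv : Ring.inverse B = (e.symm : V →L[ℂ] V) := by
    rw [show B = ((⟨B, (e.symm : V →L[ℂ] V), hmul1, hmul2⟩ : (V →L[ℂ] V)ˣ) : V →L[ℂ] V) from rfl,
      Ring.inverse_unit]
    rfl
  rw [hinv]
  apply ContinuousLinearMap.opNorm_le_bound _ (by positivity)
  intro v
  have h1 : B ((e.symm : V →L[ℂ] V) v) = v := by
    have := congrFun (congrArg DFunLike.coe hmul1) v
    simpa using this
  have h2 := hlb ((e.symm : V →L[ℂ] V) v)
  rw [h1] at h2
  rw [one_div, inv_mul_eq_div, le_div_iff₀ hc, mul_comm]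
  exact h2

section Aux
variable {V : Type*} [NormedAddCommGroup V] [InnerProductSpace ℂ V] [CompleteSpace V]

lemma inner_self_real_of_selfAdjoint (T : V →L[ℂ] V) (hT : IsSelfAdjoint T) (u : V) :
    (inner ℂ u (T u) : ℂ) = (((inner ℂ u (T u) : ℂ)).re : ℂ) := by
  have hadj : ContinuousLinearMap.adjoint T = T := hT.adjoint_eq
  have h1 : (starRingEnd ℂ) (inner ℂ u (T u) : ℂ) = inner ℂ u (T u) := by
    rw [inner_conj_symm]
    conv_lhs => rw [← hadj]
    rw [ContinuousLinearMap.adjoint_inner_left]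
  exact (Complex.conj_eq_iff_re.mp h1).symm

lemma inner_B_apply (T Q : V →L[ℂ] V) (z : ℂ) (u : V) :
    (inner ℂ u ((z • ((1 : V →L[ℂ] V) + Complex.I • T) - Q) u) : ℂ)
      = z * ((‖u‖^2 : ℝ) + Complex.I * (inner ℂ u (T u) : ℂ)) - (inner ℂ u (Q u) : ℂ) := by
  simp only [ContinuousLinearMap.sub_apply, ContinuousLinearMap.smul_apply,
    ContinuousLinearMap.add_apply, ContinuousLinearMap.one_apply,
    inner_sub_right, inner_smul_right, inner_add_right]
  rw [inner_self_eq_norm_sq_to_K]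
  push_cast
  simp only [sub_eq_add_neg]
  rfl

end Aux

section Main
variable {V : Type*} [NormedAddCommGroup V] [InnerProductSpace ℂ V] [CompleteSpace V]

lemma re_lt_of_arg (z : ℂ) (hz0 : z ≠ 0) (θ'' : ℝ) (h0 : 0 ≤ θ'') (harg : θ'' < |z.arg|) :
    z.re < Real.cos θ'' * ‖z‖ := by
  have habs : 0 < ‖z‖ := norm_pos_iff.mpr hz0
  have h1 : Real.cos z.arg = z.re / ‖z‖ := Complex.cos_arg hz0
  have h2 : Real.cos |z.arg| < Real.cos θ'' :=
    Real.cos_lt_cos_of_nonneg_of_le_pi h0 (Complex.abs_arg_le_pi z) harg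
  rw [Real.cos_abs, h1] at h2
  calc z.re = (z.re / ‖z‖) * ‖z‖ := by field_simp
  _ < Real.cos θ'' * ‖z‖ := mul_lt_mul_of_pos_right h2 habs

lemma inner_B_lb (T Q : V →L[ℂ] V) (hT : IsSelfAdjoint T) (hQ : IsSelfAdjoint Q)
    (hQnn : ∀ u : V, 0 ≤ (inner ℂ u (Q u) : ℂ).re) (k c : ℝ) (hc0 : 0 < c) (hc1 : c ≤ 1)
    (hkey : ∀ x y s q : ℝ, |s| ≤ ‖T‖ → 0 ≤ q → x < k * Real.sqrt (x^2 + y^2) →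
      c^2 * (x^2 + y^2) ≤ (x - s*y - q)^2 + (y + s*x)^2)
    (z : ℂ) (hzre : z.re < k * ‖z‖) :
    ∀ u : V, (c * ‖z‖) * ‖u‖^2
      ≤ ‖(inner ℂ u ((z • ((1 : V →L[ℂ] V) + Complex.I • T) - Q) u) : ℂ)‖ := by
  intro u
  rcases eq_or_ne u 0 with rfl | hu
  · simp
  have hn : (0:ℝ) < ‖u‖^2 := by
    have := norm_pos_iff.mpr hu
    positivity
  set n : ℝ := ‖u‖^2 with hndef
  set t : ℝ := (inner ℂ u (T u) : ℂ).re with htdef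
  set q : ℝ := (inner ℂ u (Q u) : ℂ).re with hqdef
  have hq0 : 0 ≤ q := hQnn u
  have ht : (inner ℂ u (T u) : ℂ) = (t : ℂ) := inner_self_real_of_selfAdjoint T hT u
  have hqq : (inner ℂ u (Q u) : ℂ) = (q : ℂ) := inner_self_real_of_selfAdjoint Q hQ u
  have htb : |t| ≤ ‖T‖ * n := by
    have h1 : |t| ≤ ‖(inner ℂ u (T u) : ℂ)‖ := by
      rw [htdef]
      exact Complex.abs_re_le_norm _
    have h2 : ‖(inner ℂ u (T u) : ℂ)‖ ≤ ‖u‖ * ‖T u‖ := norm_inner_le_norm _ _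
    have h3 : ‖T u‖ ≤ ‖T‖ * ‖u‖ := T.le_opNorm u
    have h4 : ‖u‖ * ‖T u‖ ≤ ‖u‖ * (‖T‖ * ‖u‖) :=
      mul_le_mul_of_nonneg_left h3 (norm_nonneg u)
    calc |t| ≤ ‖u‖ * (‖T‖ * ‖u‖) := by linarith
    _ = ‖T‖ * n := by rw [hndef]; ring
  set s : ℝ := t / n with hsdef
  set q' : ℝ := q / n with hq'def
  have hs : |s| ≤ ‖T‖ := by
    rw [hsdef, abs_div, abs_of_pos hn, div_le_iff₀ hn]
    exact htb
  have hq'0 : 0 ≤ q' := div_nonneg hq0 hn.le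
  have hval : (inner ℂ u ((z • ((1 : V →L[ℂ] V) + Complex.I • T) - Q) u) : ℂ)
      = (n : ℂ) * (z * (1 + (s:ℂ) * Complex.I) - (q' : ℂ)) := by
    rw [inner_B_apply, ht, hqq, hsdef, hq'def]
    push_cast
    have hn0 : (n:ℂ) ≠ 0 := by exact_mod_cast hn.ne'
    field_simp
    rw [hndef]
    push_cast
    ring
  set w : ℂ := z * (1 + (s:ℂ) * Complex.I) - (q' : ℂ) with hwdef
  have hw_re : w.re = z.re - s * z.im - q' := by
    rw [hwdef]
    simp [Complex.mul_re, Complex.add_re, Complex.sub_re]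
    ring
  have hw_im : w.im = z.im + s * z.re := by
    rw [hwdef]
    simp [Complex.mul_im, Complex.add_im, Complex.sub_im]
    ring
  have habs_sqrt : ‖z‖ = Real.sqrt (z.re^2 + z.im^2) := by
    rw [Complex.norm_def, Complex.normSq_apply]
    ring_nf
  have hzre' : z.re < k * Real.sqrt (z.re^2 + z.im^2) := by rwa [habs_sqrt] at hzre
  have hk := hkey z.re z.im s q' hs hq'0 hzre'
  have habsw : c * ‖z‖ ≤ ‖w‖ := by
    have h1 : (‖w‖)^2 = w.re^2 + w.im^2 := by
      rw [Complex.sq_norm, Complex.normSq_apply]; ring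
    have h2 : (‖z‖)^2 = z.re^2 + z.im^2 := by
      rw [Complex.sq_norm, Complex.normSq_apply]; ring
    have h3 : (c * ‖z‖)^2 ≤ (‖w‖)^2 := by
      rw [h1, hw_re, hw_im]
      calc (c * ‖z‖)^2 = c^2 * (z.re^2 + z.im^2) := by rw [← h2]; ring
      _ ≤ (z.re - s*z.im - q')^2 + (z.im + s*z.re)^2 := hk
    exact le_of_sq_le_sq' _ _ (mul_nonneg hc0.le (norm_nonneg _))
      (norm_nonneg _) h3
  rw [hval, norm_mul]
  have hnn : ‖(n : ℂ)‖ = n := by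
    rw [Complex.norm_real, Real.norm_of_nonneg hn.le]
  rw [hnn]
  have hwn : ‖w‖ = ‖w‖ := rfl
  calc c * ‖z‖ * n ≤ ‖w‖ * n :=
    mul_le_mul_of_nonneg_right habsw hn.le
  _ = n * ‖w‖ := by rw [hwn]; ring

end Main

section Final
variable {V : Type*} [NormedAddCommGroup V] [InnerProductSpace ℂ V] [CompleteSpace V]

lemma resolvent_master (T Q : V →L[ℂ] V) (hT : IsSelfAdjoint T) (hQ : IsSelfAdjoint Q)
    (hQnn : ∀ u : V, 0 ≤ (inner ℂ u (Q u) : ℂ).re)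
    (A : V →L[ℂ] V) (hA : A = Q * Ring.inverse ((1 : V →L[ℂ] V) + Complex.I • T))
    (k c : ℝ) (hc0 : 0 < c) (hc1 : c ≤ 1)
    (hkey : ∀ x y s q : ℝ, |s| ≤ ‖T‖ → 0 ≤ q → x < k * Real.sqrt (x^2 + y^2) →
      c^2 * (x^2 + y^2) ≤ (x - s*y - q)^2 + (y + s*x)^2)
    (z : ℂ) (hz0 : z ≠ 0) (hzre : z.re < k * ‖z‖) :
    IsUnit (z • (1 : V →L[ℂ] V) - A) ∧
      ‖z • Ring.inverse (z • (1 : V →L[ℂ] V) - A)‖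
        ≤ ‖(1 : V →L[ℂ] V) + Complex.I • T‖ / c := by
  set G : V →L[ℂ] V := (1 : V →L[ℂ] V) + Complex.I • T with hGdef
  -- G is a unit
  have hGlb : ∀ u : V, (1:ℝ) * ‖u‖^2 ≤ ‖(inner ℂ u (G u) : ℂ)‖ := by
    intro u
    have h1 : (inner ℂ u (G u) : ℂ)
        = (1:ℂ) * ((‖u‖^2 : ℝ) + Complex.I * (inner ℂ u (T u) : ℂ)) - (inner ℂ u ((0 : V →L[ℂ] V) u) : ℂ) := by
      have := inner_B_apply (V := V) T 0 1 u
      simpa [hGdef] using this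
    have ht : (inner ℂ u (T u) : ℂ) = (((inner ℂ u (T u) : ℂ)).re : ℂ) :=
      inner_self_real_of_selfAdjoint T hT u
    have h2 : (inner ℂ u (G u) : ℂ).re = ‖u‖^2 := by
      rw [h1, ht]
      simp
      norm_cast
    rw [one_mul, ← h2]
    calc (inner ℂ u (G u) : ℂ).re ≤ |(inner ℂ u (G u) : ℂ).re| := le_abs_self _
    _ ≤ ‖(inner ℂ u (G u) : ℂ)‖ := Complex.abs_re_le_norm _
    _ = ‖(inner ℂ u (G u) : ℂ)‖ := rfl
  obtain ⟨hGu, -⟩ := isUnit_of_inner_lb G 1 one_pos hGlb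
  -- B z is a unit with inverse bound
  have habs : 0 < ‖z‖ := norm_pos_iff.mpr hz0
  have hBlb := inner_B_lb T Q hT hQ hQnn k c hc0 hc1 hkey z hzre
  obtain ⟨hBu, hBinv⟩ := isUnit_of_inner_lb (z • G - Q) (c * ‖z‖)
    (mul_pos hc0 habs) hBlb
  -- factorization
  have hfac : z • (1 : V →L[ℂ] V) - A = (z • G - Q) * Ring.inverse G := by
    rw [sub_mul, smul_mul_assoc, Ring.mul_inverse_cancel G hGu, hA]
  have hRu : IsUnit (Ring.inverse G) := by
    rcases hGu with ⟨ug, hug⟩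
    rw [← hug, Ring.inverse_unit]
    exact Units.isUnit _
  have hu : IsUnit (z • (1 : V →L[ℂ] V) - A) := by
    rw [hfac]; exact hBu.mul hRu
  refine ⟨hu, ?_⟩
  -- inverse formula
  set W : V →L[ℂ] V := G * Ring.inverse (z • G - Q) with hWdef
  have p1 : (z • (1 : V →L[ℂ] V) - A) * W = 1 := by
    have hmid : (Ring.inverse G) * (G * Ring.inverse (z • G - Q)) = Ring.inverse (z • G - Q) := by
      rw [← mul_assoc, Ring.inverse_mul_cancel G hGu, one_mul]
    rw [hfac, hWdef, mul_assoc, hmid, Ring.mul_inverse_cancel _ hBu]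
  have p2 : W * (z • (1 : V →L[ℂ] V) - A) = 1 := by
    have hmid : Ring.inverse (z • G - Q) * ((z • G - Q) * Ring.inverse G) = Ring.inverse G := by
      rw [← mul_assoc, Ring.inverse_mul_cancel _ hBu, one_mul]
    rw [hfac, hWdef, mul_assoc, hmid, Ring.mul_inverse_cancel G hGu]
  have hinv_eq : Ring.inverse (z • (1 : V →L[ℂ] V) - A) = W := by
    rw [show z • (1 : V →L[ℂ] V) - A
        = ((⟨z • (1 : V →L[ℂ] V) - A, W, p1, p2⟩ : (V →L[ℂ] V)ˣ) : V →L[ℂ] V) from rfl,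
      Ring.inverse_unit]
    rfl
  rw [hinv_eq, norm_smul]
  have hW : ‖W‖ ≤ ‖G‖ * (1 / (c * ‖z‖)) := by
    calc ‖W‖ ≤ ‖G‖ * ‖Ring.inverse (z • G - Q)‖ := norm_mul_le _ _
    _ ≤ ‖G‖ * (1 / (c * ‖z‖)) :=
      mul_le_mul_of_nonneg_left hBinv (norm_nonneg G)
  have hnz : ‖z‖ = ‖z‖ := rfl
  calc ‖z‖ * ‖W‖ ≤ ‖z‖ * (‖G‖ * (1 / (c * ‖z‖))) :=
    mul_le_mul_of_nonneg_left hW (norm_nonneg z)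
  _ = ‖G‖ / c := by
      rw [hnz]
      field_simp

theorem sectorial_aux
    (T Q : V →L[ℂ] V) (hT : IsSelfAdjoint T) (hQ : IsSelfAdjoint Q)
    (hQnn : ∀ u : V, 0 ≤ (inner ℂ u (Q u) : ℂ).re)
    (A : V →L[ℂ] V) (hA : A = Q * Ring.inverse ((1 : V →L[ℂ] V) + Complex.I • T)) :
    ∃ θ ∈ Set.Ioo (0 : ℝ) (Real.pi / 2),
      spectrum ℂ A ⊆ {z : ℂ | z = 0 ∨ |z.arg| ≤ θ} ∧
      ∀ θ' ∈ Set.Ioo θ Real.pi, ∃ M : ℝ,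
        ∀ z : ℂ, z ∉ {z : ℂ | z = 0 ∨ |z.arg| ≤ θ'} → z ≠ 0 →
          IsUnit (z • (1 : V →L[ℂ] V) - A) ∧
          ‖z • Ring.inverse (z • (1 : V →L[ℂ] V) - A)‖ ≤ M := by
  set τ : ℝ := ‖T‖ with hτdef
  have hτ : 0 ≤ τ := norm_nonneg T
  set L : ℝ := Real.sqrt (1 + τ^2) with hLdef
  have hL0 : 0 ≤ L := Real.sqrt_nonneg _
  have hL2 : L^2 = 1 + τ^2 := Real.sq_sqrt (by positivity)
  have hL1 : 1 ≤ L := by nlinarith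
  set k0 : ℝ := 1 / (2*L) with hk0def
  have hk0pos : 0 < k0 := by positivity
  have hk0L : k0 * L = 1/2 := by
    rw [hk0def]
    field_simp
  have hk0le : k0 ≤ 1/2 := by
    rw [hk0def, div_le_div_iff₀ (by positivity) (by norm_num)]
    linarith
  set θ : ℝ := Real.arccos k0 with hθdef
  have hθpos : 0 < θ := Real.arccos_pos.mpr (by linarith)
  have hθlt : θ < Real.pi / 2 := Real.arccos_lt_pi_div_two.mpr hk0pos
  have hcosθ : Real.cos θ = k0 := Real.cos_arccos (by linarith) (by linarith)
  refine ⟨θ, ⟨hθpos, hθlt⟩, ?_, ?_⟩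
  · -- spectrum inclusion
    intro z hz
    by_contra hzs
    simp only [Set.mem_setOf_eq, not_or, not_le] at hzs
    obtain ⟨hz0, harg⟩ := hzs
    have hzre : z.re < k0 * ‖z‖ := by
      have := re_lt_of_arg z hz0 θ hθpos.le harg
      rwa [hcosθ] at this
    obtain ⟨c, hc0, hc1, hkey⟩ := key_ineq τ k0 hτ (by rw [← hLdef, hk0L]; norm_num)
    have hres := resolvent_master T Q hT hQ hQnn A hA k0 c hc0 hc1 hkey z hz0 hzre
    rw [spectrum.mem_iff] at hz
    exact hz (by rw [Algebra.algebraMap_eq_smul_one]; exact hres.1)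
  · -- resolvent bound
    intro θ' hθ'
    have hθ'1 : θ < θ' := hθ'.1
    have hθ'2 : θ' < Real.pi := hθ'.2
    set k' : ℝ := Real.cos θ' with hk'def
    have hk'lt : k' < k0 := by
      rw [hk'def, ← hcosθ]
      exact Real.cos_lt_cos_of_nonneg_of_le_pi hθpos.le hθ'2.le hθ'1
    have hk'L : k' * L < 1 := by
      have h1 : k' * L < k0 * L := by
        rcases hL1.lt_or_eq with h | h
        · exact mul_lt_mul_of_pos_right hk'lt (by linarith)
        · exact mul_lt_mul_of_pos_right hk'lt (by linarith)
      rw [hk0L] at h1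
      linarith
    obtain ⟨c, hc0, hc1, hkey⟩ := key_ineq τ k' hτ (by rw [← hLdef]; exact hk'L)
    refine ⟨‖(1 : V →L[ℂ] V) + Complex.I • T‖ / c, ?_⟩
    intro z hzs hz0
    simp only [Set.mem_setOf_eq, not_or, not_le] at hzs
    have harg : θ' < |z.arg| := hzs.2
    have hθ'pos : 0 < θ' := hθpos.trans hθ'1
    have hzre : z.re < k' * ‖z‖ := by
      have := re_lt_of_arg z hz0 θ' hθ'pos.le harg
      rwa [← hk'def] at this
    exact resolvent_master T Q hT hQ hQnn A hA k' c hc0 hc1 hkey z hz0 hzre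

end Final

/-- The closed sector `Σ_θ = {0} ∪ {z ≠ 0 : |arg z| ≤ θ}` in `ℂ`. -/
def sector (θ : ℝ) : Set ℂ := {z : ℂ | z = 0 ∨ |z.arg| ≤ θ}

/-- Let `V` be a complex Hilbert space, `T, Q` bounded selfadjoint operators
on `V` with `Q` nonnegative, and set `A := Q(I + iT)⁻¹`. Then `A` is sectorial of angle
strictly less than `π/2`: there exists `θ ∈ (0, π/2)` such that the spectrum of `A` is
contained in the closed sector `Σ_θ`, and for every `θ' ∈ (θ, π)` one has
`sup{‖z(zI − A)⁻¹‖ : z ∈ ℂ \ Σ_{θ'}, z ≠ 0} < ∞`. -/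
theorem sectorial_of_selfAdjoint_nonneg
    {V : Type*} [NormedAddCommGroup V] [InnerProductSpace ℂ V] [CompleteSpace V]
    (T Q : V →L[ℂ] V) (hT : IsSelfAdjoint T) (hQ : IsSelfAdjoint Q)
    (hQnn : ∀ u : V, 0 ≤ (inner ℂ u (Q u) : ℂ).re)
    (A : V →L[ℂ] V) (hA : A = Q * Ring.inverse ((1 : V →L[ℂ] V) + Complex.I • T)) :
    ∃ θ ∈ Set.Ioo (0 : ℝ) (Real.pi / 2),
      spectrum ℂ A ⊆ sector θ ∧
      ∀ θ' ∈ Set.Ioo θ Real.pi, ∃ M : ℝ,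
        ∀ z : ℂ, z ∉ sector θ' → z ≠ 0 →
          IsUnit (z • (1 : V →L[ℂ] V) - A) ∧
          ‖z • Ring.inverse (z • (1 : V →L[ℂ] V) - A)‖ ≤ M := by
  exact sectorial_aux T Q hT hQ hQnn A hA
end

section
/- Let V be a complex Hilbert space and A ∈ L(V) a bounded operator such that for every z ∈ ℂ with Re z ≤ 0 and z ≠ 0 the operator zI − A is boundedly invertible with ‖z(zI − A)⁻¹‖ ≤ M for a fixed constant M ≥ 0. Then I + A is boundedly invertible, and the Cayley transform C := (I − A)(I + A)⁻¹ satisfies: for every z ∈ ℂ with |z| > 1, zI − C is boundedly invertible and ‖(z − 1)(zI − C)⁻¹‖ ≤ M·‖I + A‖. -/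
/-- Let `V` be a complex Hilbert space and `A ∈ L(V)` a bounded operator
such that for every `z ∈ ℂ` with `Re z ≤ 0` and `z ≠ 0` the operator `zI − A` is
boundedly invertible with `‖z(zI − A)⁻¹‖ ≤ M` for a fixed constant `M ≥ 0`. Then `I + A`
is boundedly invertible, and the Cayley transform `C := (I − A)(I + A)⁻¹` satisfies:
for every `z ∈ ℂ` with `|z| > 1`, `zI − C` is boundedly invertible and
`‖(z − 1)(zI − C)⁻¹‖ ≤ M·‖I + A‖`. -/
theorem cayley_transform_ritt_bound
    {V : Type*} [NormedAddCommGroup V] [InnerProductSpace ℂ V] [CompleteSpace V]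
    (A : V →L[ℂ] V) (M : ℝ) (hM : 0 ≤ M)
    (h : ∀ z : ℂ, z.re ≤ 0 → z ≠ 0 →
      IsUnit (z • (1 : V →L[ℂ] V) - A) ∧
      ‖z • Ring.inverse (z • (1 : V →L[ℂ] V) - A)‖ ≤ M) :
    IsUnit ((1 : V →L[ℂ] V) + A) ∧
    ∀ z : ℂ, 1 < ‖z‖ →
      IsUnit (z • (1 : V →L[ℂ] V) -
        ((1 : V →L[ℂ] V) - A) * Ring.inverse ((1 : V →L[ℂ] V) + A)) ∧
      ‖(z - 1) • Ring.inverse (z • (1 : V →L[ℂ] V) -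
        ((1 : V →L[ℂ] V) - A) * Ring.inverse ((1 : V →L[ℂ] V) + A))‖ ≤
          M * ‖(1 : V →L[ℂ] V) + A‖ := by
  have hm1 := h (-1) (by norm_num) (by norm_num)
  have heq : ((-1 : ℂ)) • (1 : V →L[ℂ] V) - A = -((1 : V →L[ℂ] V) + A) := by
    rw [neg_one_smul]; abel
  have h1A : IsUnit ((1 : V →L[ℂ] V) + A) := by
    have := hm1.1
    rw [heq] at this
    exact (IsUnit.neg_iff _).mp this
  refine ⟨h1A, fun z hz => ?_⟩
  set B := Ring.inverse ((1 : V →L[ℂ] V) + A) with hBdef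
  have hB1 : ((1 : V →L[ℂ] V) + A) * B = 1 := Ring.mul_inverse_cancel _ h1A
  have hB2 : B * ((1 : V →L[ℂ] V) + A) = 1 := Ring.inverse_mul_cancel _ h1A
  -- z ≠ 1, 1 + z ≠ 0
  have hz1 : z ≠ 1 := by
    rintro rfl; simp at hz
  have hzn1 : (1 + z) ≠ 0 := by
    intro hc
    have : z = -1 := by linear_combination hc
    rw [this] at hz; simp at hz
  set w : ℂ := (1 - z) / (1 + z) with hwdef
  have hw_ne : w ≠ 0 := div_ne_zero (sub_ne_zero.mpr (Ne.symm hz1)) hzn1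
  have hnormSq : 1 < Complex.normSq z := by
    rw [← Complex.sq_norm]; nlinarith [hz]
  have hw_re : w.re ≤ 0 := by
    rw [hwdef, Complex.div_re]
    have hpos : 0 < Complex.normSq (1 + z) := Complex.normSq_pos.mpr hzn1
    rw [← add_div]
    apply div_nonpos_of_nonpos_of_nonneg _ hpos.le
    have : (1 - z).re * (1 + z).re + (1 - z).im * (1 + z).im
        = 1 - Complex.normSq z := by
      simp [Complex.normSq_apply]; ring
    rw [this]; linarith
  obtain ⟨huw, hnw⟩ := h w hw_re hw_ne
  set W := Ring.inverse (w • (1 : V →L[ℂ] V) - A) with hWdef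
  have hW1 : (w • (1 : V →L[ℂ] V) - A) * W = 1 := Ring.mul_inverse_cancel _ huw
  have hW2 : W * (w • (1 : V →L[ℂ] V) - A) = 1 := Ring.inverse_mul_cancel _ huw
  have hwscal : (-(1 + z)) * w = z - 1 := by
    rw [hwdef, mul_div_assoc', div_eq_iff hzn1]; ring
  -- key identity
  have hid : z • (1 : V →L[ℂ] V) - ((1 : V →L[ℂ] V) - A) * B
      = (-(1 + z)) • ((w • (1 : V →L[ℂ] V) - A) * B) := by
    rw [show z • (1 : V →L[ℂ] V) = z • (((1 : V →L[ℂ] V) + A) * B) from by rw [hB1]]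
    simp only [add_mul, sub_mul, one_mul, smul_mul_assoc, smul_sub, smul_smul, hwscal]
    module
  set D := (-(1 + z))⁻¹ • (((1 : V →L[ℂ] V) + A) * W) with hDdef
  have hzne : (-(1 + z)) ≠ 0 := neg_ne_zero.mpr hzn1
  have hTD : (z • (1 : V →L[ℂ] V) - ((1 : V →L[ℂ] V) - A) * B) * D = 1 := by
    rw [hid, hDdef, smul_mul_assoc, mul_smul_comm, smul_smul,
      mul_inv_cancel₀ hzne, one_smul]
    calc (w • (1 : V →L[ℂ] V) - A) * B * (((1 : V →L[ℂ] V) + A) * W)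
        = (w • (1 : V →L[ℂ] V) - A) * (B * ((1 : V →L[ℂ] V) + A)) * W := by
          noncomm_ring
      _ = 1 := by rw [hB2, mul_one, hW1]
  have hDT : D * (z • (1 : V →L[ℂ] V) - ((1 : V →L[ℂ] V) - A) * B) = 1 := by
    rw [hid, hDdef, smul_mul_assoc, mul_smul_comm, smul_smul,
      inv_mul_cancel₀ hzne, one_smul]
    calc ((1 : V →L[ℂ] V) + A) * W * ((w • (1 : V →L[ℂ] V) - A) * B)
        = ((1 : V →L[ℂ] V) + A) * (W * (w • (1 : V →L[ℂ] V) - A)) * B := by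
          noncomm_ring
      _ = 1 := by rw [hW2, mul_one, hB1]
  set u : (V →L[ℂ] V)ˣ := ⟨z • (1 : V →L[ℂ] V) - ((1 : V →L[ℂ] V) - A) * B, D, hTD, hDT⟩
  have hu : IsUnit (z • (1 : V →L[ℂ] V) - ((1 : V →L[ℂ] V) - A) * B) := ⟨u, rfl⟩
  refine ⟨hu, ?_⟩
  have hinv : Ring.inverse (z • (1 : V →L[ℂ] V) - ((1 : V →L[ℂ] V) - A) * B) = D :=
    Ring.inverse_unit u
  rw [hinv, hDdef, smul_smul]
  have hscal2 : (z - 1) * (-(1 + z))⁻¹ = w := by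
    rw [hwdef, eq_div_iff hzn1, ← neg_inv]
    field_simp
    ring
  rw [hscal2]
  have : w • (((1 : V →L[ℂ] V) + A) * W) = ((1 : V →L[ℂ] V) + A) * (w • W) := by
    rw [mul_smul_comm]
  rw [this]
  calc ‖((1 : V →L[ℂ] V) + A) * (w • W)‖
      ≤ ‖(1 : V →L[ℂ] V) + A‖ * ‖w • W‖ := norm_mul_le _ _
    _ ≤ ‖(1 : V →L[ℂ] V) + A‖ * M := by
        exact mul_le_mul_of_nonneg_left hnw (norm_nonneg _)
    _ = M * ‖(1 : V →L[ℂ] V) + A‖ := mul_comm _ _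
end

section
/- Let V be a complex Hilbert space and T, Q bounded selfadjoint operators on V with Q nonnegative. Then I + Q + iT is boundedly invertible, and the operator C := (I − Q + iT)(I + Q + iT)⁻¹ is a Ritt operator: the spectrum of C is contained in the closed unit disk, and sup{‖(z − 1)(zI − C)⁻¹‖ : z ∈ ℂ, |z| > 1} < ∞ (in particular zI − C is boundedly invertible for every |z| > 1). -/
open ContinuousLinearMap in
lemma coercive_isUnit {V : Type*} [NormedAddCommGroup V] [InnerProductSpace ℂ V] [CompleteSpace V]
    (S : V →L[ℂ] V) (h : ∀ u : V, ‖u‖ ^ 2 ≤ (inner ℂ u (S u) : ℂ).re) :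
    IsUnit S ∧ ∀ v : V, ‖Ring.inverse S v‖ ≤ ‖v‖ := by
  have hlow : ∀ u : V, ‖u‖ ≤ ‖S u‖ := by
    intro u
    rcases eq_or_ne u 0 with rfl | hu
    · simp
    · have h1 : ‖u‖ ^ 2 ≤ ‖(inner ℂ u (S u) : ℂ)‖ := (h u).trans (Complex.re_le_norm _)
      have h2 : ‖(inner ℂ u (S u) : ℂ)‖ ≤ ‖u‖ * ‖S u‖ := norm_inner_le_norm u (S u)
      have := h1.trans h2
      have hupos : 0 < ‖u‖ := norm_pos_iff.mpr hu
      nlinarith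
  have hanti : AntilipschitzWith 1 S := S.antilipschitz_of_bound (by simpa using hlow)
  have hinj : Function.Injective S := hanti.injective
  have hclosed : IsClosed (Set.range S) := hanti.isClosed_range S.uniformContinuous
  have hrange : LinearMap.range (S : V →ₗ[ℂ] V) = ⊤ := by
    have : IsClosed ((LinearMap.range (S : V →ₗ[ℂ] V) : Submodule ℂ V) : Set V) := by
      simpa [LinearMap.coe_range] using hclosed
    haveI : CompleteSpace (LinearMap.range (S : V →ₗ[ℂ] V)) := this.completeSpace_coe
    rw [← Submodule.orthogonal_eq_bot_iff]
    rw [Submodule.eq_bot_iff]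
    intro v hv
    have hSv : (inner ℂ (S v) v : ℂ) = 0 := by
      exact hv (S v) (LinearMap.mem_range_self _ v)
    have hvS : (inner ℂ v (S v) : ℂ) = 0 := by
      rw [← inner_conj_symm, hSv, map_zero]
    have := h v
    rw [hvS] at this
    simp only [Complex.zero_re] at this
    have : ‖v‖ = 0 := by nlinarith [norm_nonneg v]
    simpa using this
  have hbij : Function.Bijective S :=
    ⟨hinj, LinearMap.range_eq_top.mp hrange⟩
  have hu : IsUnit S := ContinuousLinearMap.isUnit_iff_bijective.mpr hbij
  refine ⟨hu, fun v => ?_⟩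
  have hinv : Ring.inverse S = ((hu.unit⁻¹ : (V →L[ℂ] V)ˣ) : V →L[ℂ] V) := by
    conv_lhs => rw [← hu.unit_spec]
    exact Ring.inverse_unit hu.unit
  have happ : S (((hu.unit⁻¹ : (V →L[ℂ] V)ˣ) : V →L[ℂ] V) v) = v := by
    have : (↑hu.unit * ↑hu.unit⁻¹ : V →L[ℂ] V) = 1 := by
      rw [← Units.val_mul, mul_inv_cancel, Units.val_one]
    calc S (((hu.unit⁻¹ : (V →L[ℂ] V)ˣ) : V →L[ℂ] V) v)
        = ((↑hu.unit * ↑hu.unit⁻¹ : V →L[ℂ] V)) v := by rw [hu.unit_spec]; rfl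
      _ = v := by rw [this]; rfl
  rw [hinv]
  calc ‖((hu.unit⁻¹ : (V →L[ℂ] V)ˣ) : V →L[ℂ] V) v‖
      ≤ ‖S (((hu.unit⁻¹ : (V →L[ℂ] V)ˣ) : V →L[ℂ] V) v)‖ := hlow _
    _ = ‖v‖ := by rw [happ]

lemma im_inner_selfAdjoint {V : Type*} [NormedAddCommGroup V] [InnerProductSpace ℂ V]
    [CompleteSpace V] (R : V →L[ℂ] V) (hR : IsSelfAdjoint R) (u : V) :
    (inner ℂ u (R u) : ℂ).im = 0 := by
  have h1 : (starRingEnd ℂ) (inner ℂ u (R u) : ℂ) = inner ℂ u (R u) := by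
    rw [inner_conj_symm]
    exact hR.isSymmetric u u
  exact Complex.conj_eq_iff_im.mp h1


/-- Let `V` be a complex Hilbert space and `T, Q` bounded selfadjoint
operators on `V` with `Q` nonnegative. Then `I + Q + iT` is boundedly invertible, and
`C := (I − Q + iT)(I + Q + iT)⁻¹` is a Ritt operator: the spectrum of `C` is contained
in the closed unit disk, and `sup{‖(z − 1)(zI − C)⁻¹‖ : |z| > 1} < ∞` (in particular
`zI − C` is boundedly invertible for every `|z| > 1`). -/
theorem cayley_is_ritt_of_selfAdjoint_nonneg
    {V : Type*} [NormedAddCommGroup V] [InnerProductSpace ℂ V] [CompleteSpace V]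
    (T Q : V →L[ℂ] V) (hT : IsSelfAdjoint T) (hQ : IsSelfAdjoint Q)
    (hQnn : ∀ u : V, 0 ≤ (inner ℂ u (Q u) : ℂ).re)
    (C : V →L[ℂ] V)
    (hC : C = ((1 : V →L[ℂ] V) - Q + Complex.I • T) *
      Ring.inverse ((1 : V →L[ℂ] V) + Q + Complex.I • T)) :
    IsUnit ((1 : V →L[ℂ] V) + Q + Complex.I • T) ∧
    spectrum ℂ C ⊆ Metric.closedBall (0 : ℂ) 1 ∧
    ∃ M : ℝ, ∀ z : ℂ, 1 < ‖z‖ →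
      IsUnit (z • (1 : V →L[ℂ] V) - C) ∧
      ‖(z - 1) • Ring.inverse (z • (1 : V →L[ℂ] V) - C)‖ ≤ M := by
  set A : V →L[ℂ] V := (1 : V →L[ℂ] V) + Q + Complex.I • T with hA_def
  set B : V →L[ℂ] V := (1 : V →L[ℂ] V) - Q + Complex.I • T with hB_def
  have hqim : ∀ u : V, (inner ℂ u (Q u) : ℂ).im = 0 := im_inner_selfAdjoint Q hQ
  have htim : ∀ u : V, (inner ℂ u (T u) : ℂ).im = 0 := im_inner_selfAdjoint T hT
  have hnn : ∀ u : V, (inner ℂ u u : ℂ) = ((‖u‖ ^ 2 : ℝ) : ℂ) := by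
    intro u; rw [inner_self_eq_norm_sq_to_K]; exact (Complex.ofReal_pow _ _).symm
  -- coercivity of A
  have hAcoer : ∀ u : V, ‖u‖ ^ 2 ≤ (inner ℂ u (A u) : ℂ).re := by
    intro u
    have : (inner ℂ u (A u) : ℂ)
        = inner ℂ u u + inner ℂ u (Q u) + Complex.I * inner ℂ u (T u) := by
      simp [hA_def, ContinuousLinearMap.add_apply, ContinuousLinearMap.smul_apply,
        inner_add_right, inner_smul_right]
    rw [this, hnn u]
    have h1 := hQnn u
    have h2 := htim u
    simp [Complex.add_re, Complex.mul_re, h2, ← Complex.ofReal_pow, Complex.ofReal_re]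
    linarith
  obtain ⟨hAunit, hAinv⟩ := coercive_isUnit A hAcoer
  have hinvSnorm : ∀ (R : V →L[ℂ] V), (∀ v : V, ‖Ring.inverse R v‖ ≤ ‖v‖) →
      ‖Ring.inverse R‖ ≤ 1 := fun R hR =>
    ContinuousLinearMap.opNorm_le_bound _ zero_le_one (fun v => by simpa using hR v)
  -- the key claim
  have key : ∀ z : ℂ, 1 < ‖z‖ →
      IsUnit (z • (1 : V →L[ℂ] V) - C) ∧
      ‖(z - 1) • Ring.inverse (z • (1 : V →L[ℂ] V) - C)‖ ≤ ‖A‖ := by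
    intro z hz
    have hz1 : z ≠ 1 := by
      intro h; rw [h] at hz; simp at hz
    set w : ℂ := z - 1 with hw_def
    have hw : w ≠ 0 := sub_ne_zero.mpr hz1
    set S : V →L[ℂ] V := w⁻¹ • (z • A - B) with hS_def
    have hzAB : z • A - B = w • (1 : V →L[ℂ] V) + (z + 1) • Q + (w * Complex.I) • T := by
      rw [hA_def, hB_def, hw_def]
      module
    have hζ : 0 ≤ ((z + 1) / w).re := by
      have habs : 1 < Complex.normSq z := by
        nlinarith [Complex.sq_norm z, norm_nonneg z]
      rw [Complex.div_re, ← add_div]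
      apply div_nonneg _ (Complex.normSq_nonneg w)
      simp only [hw_def, Complex.add_re, Complex.sub_re, Complex.one_re,
        Complex.add_im, Complex.sub_im, Complex.one_im]
      rw [Complex.normSq_apply] at habs
      nlinarith
    have hScoer : ∀ u : V, ‖u‖ ^ 2 ≤ (inner ℂ u (S u) : ℂ).re := by
      intro u
      have h1 : (inner ℂ u (S u) : ℂ)
          = w⁻¹ * (w * inner ℂ u u + (z + 1) * inner ℂ u (Q u) + (w * Complex.I) * inner ℂ u (T u)) := by
        rw [hS_def, hzAB]
        simp [ContinuousLinearMap.add_apply, ContinuousLinearMap.smul_apply,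
          inner_add_right, inner_smul_right]
        ring
      have h2 : (inner ℂ u (S u) : ℂ)
          = inner ℂ u u + ((z + 1) / w) * inner ℂ u (Q u) + Complex.I * inner ℂ u (T u) := by
        rw [h1]; field_simp
      rw [h2, hnn u]
      have hq := hQnn u
      have hqi := hqim u
      have hti := htim u
      simp [Complex.add_re, Complex.mul_re, hqi, hti, ← Complex.ofReal_pow, Complex.ofReal_re]
      nlinarith [mul_nonneg hζ hq]
    obtain ⟨hSunit, hSinv⟩ := coercive_isUnit S hScoer
    have hwS : w • S = z • A - B := by
      rw [hS_def, smul_smul, mul_inv_cancel₀ hw, one_smul]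
    have hfact : z • (1 : V →L[ℂ] V) - C = (w • S) * Ring.inverse A := by
      rw [hwS, hC, sub_mul]
      congr 1
      have hAinvA : A * Ring.inverse A = 1 := Ring.mul_inverse_cancel A hAunit
      calc z • (1 : V →L[ℂ] V) = z • (A * Ring.inverse A) := by rw [hAinvA]
        _ = (z • A) * Ring.inverse A := by rw [smul_mul_assoc]
    set E : V →L[ℂ] V := w⁻¹ • (A * Ring.inverse S) with hE_def
    have hSAS : S * Ring.inverse A * (A * Ring.inverse S) = 1 := by
      calc S * Ring.inverse A * (A * Ring.inverse S)
          = S * (Ring.inverse A * A) * Ring.inverse S := by noncomm_ring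
        _ = S * Ring.inverse S := by rw [Ring.inverse_mul_cancel A hAunit, mul_one]
        _ = 1 := Ring.mul_inverse_cancel S hSunit
    have hASA : A * Ring.inverse S * (S * Ring.inverse A) = 1 := by
      calc A * Ring.inverse S * (S * Ring.inverse A)
          = A * (Ring.inverse S * S) * Ring.inverse A := by noncomm_ring
        _ = A * Ring.inverse A := by rw [Ring.inverse_mul_cancel S hSunit, mul_one]
        _ = 1 := Ring.mul_inverse_cancel A hAunit
    have hmul1 : (z • (1 : V →L[ℂ] V) - C) * E = 1 := by
      rw [hfact, hE_def]
      simp only [smul_mul_assoc, mul_smul_comm, smul_smul]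
      rw [inv_mul_cancel₀ hw, one_smul, hSAS]
    have hmul2 : E * (z • (1 : V →L[ℂ] V) - C) = 1 := by
      rw [hfact, hE_def]
      simp only [smul_mul_assoc, mul_smul_comm, smul_smul]
      rw [mul_inv_cancel₀ hw, one_smul, hASA]
    set U : (V →L[ℂ] V)ˣ := ⟨z • (1 : V →L[ℂ] V) - C, E, hmul1, hmul2⟩ with hU_def
    have hUnit : IsUnit (z • (1 : V →L[ℂ] V) - C) := ⟨U, rfl⟩
    refine ⟨hUnit, ?_⟩
    have hinvE : Ring.inverse (z • (1 : V →L[ℂ] V) - C) = E := by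
      have : z • (1 : V →L[ℂ] V) - C = (U : V →L[ℂ] V) := rfl
      rw [this, Ring.inverse_unit]
      rfl
    rw [hinvE, hE_def, smul_smul, mul_inv_cancel₀ hw, one_smul]
    calc ‖A * Ring.inverse S‖ ≤ ‖A‖ * ‖Ring.inverse S‖ := norm_mul_le _ _
      _ ≤ ‖A‖ * 1 := by
          exact mul_le_mul_of_nonneg_left (hinvSnorm S hSinv) (norm_nonneg A)
      _ = ‖A‖ := mul_one _
  refine ⟨hAunit, ?_, ‖A‖, key⟩
  intro x hx
  rw [Metric.mem_closedBall, dist_zero_right]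
  by_contra hgt
  push_neg at hgt
  have hx1 : 1 < ‖x‖ := hgt
  exact (spectrum.mem_iff.mp hx)
    (by rw [Algebra.algebraMap_eq_smul_one]; exact (key x hx1).1)
end

section
/- Let V be a complex Hilbert space and T, Q bounded selfadjoint operators on V with Q nonnegative, and assume that T and Q commute (TQ = QT). Then Q(I + iT) is accretive, and moreover for every u ∈ V one has Re⟨Q(I + iT)⁻¹u, u⟩ ≥ 0 and |Im⟨Q(I + iT)⁻¹u, u⟩| ≤ ‖T‖·Re⟨Q(I + iT)⁻¹u, u⟩; in particular Q(I + iT)⁻¹ is θ-accretive with θ = arctan‖T‖. -/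
set_option maxHeartbeats 1000000
set_option synthInstance.maxHeartbeats 1000000

open scoped NNReal

lemma isClosed_setCentralizer {A : Type*} [NormedRing A] (s : Set A) :
    IsClosed (Set.centralizer s) := by
  have h : Set.centralizer s = ⋂ g ∈ s, {x : A | g * x = x * g} := by
    ext x; simp [Set.mem_centralizer_iff]
  rw [h]
  exact isClosed_biInter fun g _ =>
    isClosed_eq (continuous_const.mul continuous_id) (continuous_id.mul continuous_const)

lemma commute_cfc_complex {A : Type*} [CStarAlgebra A] {a b : A} (ha : IsStarNormal a)
    (h1 : b * a = a * b) (h2 : star b * a = a * star b) (f : ℂ → ℂ) :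
    b * cfc f a = cfc f a * b := by
  have hmem : cfc f a ∈ StarAlgebra.elemental ℂ a := by
    by_cases hf : ContinuousOn f (spectrum ℂ a)
    · rw [cfc_apply f a ha hf, cfcHom_eq_of_isStarNormal (ha := ha)]
      exact ((continuousFunctionalCalculus a) _).2
    · rw [cfc_apply_of_not_continuousOn a hf]
      exact zero_mem _
  have hle : StarAlgebra.elemental ℂ a ≤ StarSubalgebra.centralizer ℂ {b} := by
    apply StarAlgebra.elemental.le_of_mem
    · rw [StarSubalgebra.coe_centralizer]
      exact isClosed_setCentralizer _
    · rw [StarSubalgebra.mem_centralizer_iff]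
      rintro g (rfl : g = b)
      exact ⟨h1, h2⟩
  exact ((StarSubalgebra.mem_centralizer_iff (R := ℂ)).mp (hle hmem) b rfl).1

/-- Let `V` be a complex Hilbert space and `T, Q` bounded selfadjoint
operators on `V` with `Q` nonnegative, and assume `TQ = QT`. Then `Q(I + iT)` is
accretive, and moreover for every `u ∈ V` one has `Re⟨Q(I + iT)⁻¹u, u⟩ ≥ 0` and
`|Im⟨Q(I + iT)⁻¹u, u⟩| ≤ ‖T‖·Re⟨Q(I + iT)⁻¹u, u⟩`; in particular `Q(I + iT)⁻¹` is
`θ`-accretive with `θ = arctan‖T‖`.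
(Here `⟨·,·⟩` is linear in the first variable, i.e. `⟨Au, u⟩ = inner u (A u)` in
Mathlib's convention.) -/
theorem accretive_of_commuting_selfAdjoint
    {V : Type*} [NormedAddCommGroup V] [InnerProductSpace ℂ V] [CompleteSpace V]
    (T Q : V →L[ℂ] V) (hT : IsSelfAdjoint T) (hQ : IsSelfAdjoint Q)
    (hQnn : ∀ u : V, 0 ≤ (inner ℂ u (Q u) : ℂ).re)
    (hcomm : T * Q = Q * T)
    (A : V →L[ℂ] V) (hA : A = Q * Ring.inverse ((1 : V →L[ℂ] V) + Complex.I • T)) :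
    (∀ u : V, 0 ≤ (inner ℂ u ((Q * ((1 : V →L[ℂ] V) + Complex.I • T)) u) : ℂ).re) ∧
    (∀ u : V, 0 ≤ (inner ℂ u (A u) : ℂ).re ∧
      |(inner ℂ u (A u) : ℂ).im| ≤ ‖T‖ * (inner ℂ u (A u) : ℂ).re) ∧
    (∀ u : V, (inner ℂ u (A u) : ℂ) ∈ sector (Real.arctan ‖T‖)) := by
  -- symmetry of selfadjoint operators
  have hSym : ∀ (R : V →L[ℂ] V), IsSelfAdjoint R → ∀ x y : V,
      (inner ℂ (R x) y : ℂ) = inner ℂ x (R y) := by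
    intro R hR x y
    nth_rewrite 1 [← ContinuousLinearMap.isSelfAdjoint_iff'.mp hR]
    exact ContinuousLinearMap.adjoint_inner_left R y x
  have hreal : ∀ (R : V →L[ℂ] V), IsSelfAdjoint R → ∀ x : V, (inner ℂ x (R x) : ℂ).im = 0 := by
    intro R hR x
    have h2 : (starRingEnd ℂ) (inner ℂ x (R x) : ℂ) = inner ℂ x (R x) := by
      rw [inner_conj_symm]
      exact hSym R hR x x
    exact Complex.conj_eq_iff_im.mp h2
  -- Q*T and T*Q are selfadjoint
  have hQT : IsSelfAdjoint (Q * T) := by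
    rw [IsSelfAdjoint, star_mul, hT.star_eq, hQ.star_eq, hcomm]
  have hTQ : IsSelfAdjoint (T * Q) := hcomm ▸ hQT
  -- Part 1
  have part1 : ∀ u : V,
      0 ≤ (inner ℂ u ((Q * ((1 : V →L[ℂ] V) + Complex.I • T)) u) : ℂ).re := by
    intro u
    have hexp : (inner ℂ u ((Q * ((1 : V →L[ℂ] V) + Complex.I • T)) u) : ℂ) =
        inner ℂ u (Q u) + Complex.I * inner ℂ u ((Q * T) u) := by
      simp [ContinuousLinearMap.mul_apply, map_add, map_smul, inner_add_right,
        inner_smul_right]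
    have him : (inner ℂ u ((Q * T) u) : ℂ).im = 0 := hreal _ hQT u
    rw [hexp, Complex.add_re, Complex.mul_re, him, Complex.I_re, Complex.I_im]
    simpa using hQnn u
  -- invertibility of D = 1 + iT
  set D : V →L[ℂ] V := (1 : V →L[ℂ] V) + Complex.I • T with hD_def
  have hInotmem : Complex.I ∉ spectrum ℂ T := by
    intro h
    have := hT.im_eq_zero_of_mem_spectrum h
    simp at this
  have hu1 : IsUnit ((algebraMap ℂ (V →L[ℂ] V)) Complex.I - T) :=
    spectrum.notMem_iff.mp hInotmem
  have hu2 : IsUnit (T - (algebraMap ℂ (V →L[ℂ] V)) Complex.I) := by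
    rw [← neg_sub]
    exact hu1.neg
  have huI : IsUnit (Complex.I • (1 : V →L[ℂ] V)) := by
    refine isUnit_iff_exists.mpr ⟨(-Complex.I) • (1 : V →L[ℂ] V), ?_, ?_⟩
    · rw [smul_mul_assoc, one_mul, smul_smul, mul_neg, Complex.I_mul_I, neg_neg, one_smul]
    · rw [smul_mul_assoc, one_mul, smul_smul, neg_mul, Complex.I_mul_I, neg_neg, one_smul]
  have hDfac : D = (Complex.I • (1 : V →L[ℂ] V)) * (T - (algebraMap ℂ (V →L[ℂ] V)) Complex.I) := by
    rw [Algebra.algebraMap_eq_smul_one, mul_sub, smul_mul_assoc, one_mul, smul_mul_assoc,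
      one_mul, smul_smul, Complex.I_mul_I, hD_def]
    module
  have hDu : IsUnit D := hDfac ▸ huI.mul hu2
  -- square root of Q
  have hQpos : (0 : V →L[ℂ] V) ≤ Q := by
    rw [ContinuousLinearMap.nonneg_iff_isPositive]
    refine ⟨ContinuousLinearMap.isSelfAdjoint_iff_isSymmetric.mp hQ, fun x => ?_⟩
    have h := hQnn x
    have h2 : (inner ℂ (Q x) x : ℂ).re = (inner ℂ x (Q x) : ℂ).re := by
      rw [hSym Q hQ x x]
    simpa [ContinuousLinearMap.reApplyInnerSelf, h2] using h
  set S : V →L[ℂ] V := CFC.sqrt Q with hS_def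
  have hS2 : S * S = Q := CFC.sqrt_mul_sqrt_self Q hQpos
  have hSpos : (0 : V →L[ℂ] V) ≤ S := CFC.sqrt_nonneg (a := Q)
  have hSsa : IsSelfAdjoint S :=
    ((ContinuousLinearMap.nonneg_iff_isPositive S).mp hSpos).isSelfAdjoint
  have hTS : T * S = S * T := by
    rw [hS_def, CFC.sqrt_eq_cfc, cfc_nnreal_eq_real (ha := hQpos), cfc_real_eq_complex _ hQ]
    exact commute_cfc_complex hQ.isStarNormal hcomm (by rw [hT.star_eq]; exact hcomm) _
  -- Part 2
  have part2 : ∀ u : V, 0 ≤ (inner ℂ u (A u) : ℂ).re ∧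
      |(inner ℂ u (A u) : ℂ).im| ≤ ‖T‖ * (inner ℂ u (A u) : ℂ).re := by
    intro u
    set v : V := Ring.inverse D u with hv_def
    have hAu : A u = Q v := by
      rw [hA]; rfl
    have hu : u = v + Complex.I • T v := by
      have h := congrArg (fun E : V →L[ℂ] V => E u) (Ring.mul_inverse_cancel D hDu)
      simpa [hD_def, ContinuousLinearMap.mul_apply, ContinuousLinearMap.add_apply,
        ContinuousLinearMap.one_apply, ContinuousLinearMap.smul_apply, hv_def] using h.symm
    set c1 : ℂ := inner ℂ v (Q v) with hc1
    set c2 : ℂ := inner ℂ v ((T * Q) v) with hc2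
    have hz : (inner ℂ u (A u) : ℂ) = c1 - Complex.I * c2 := by
      rw [hAu]
      nth_rewrite 1 [hu]
      rw [inner_add_left, inner_smul_left]
      rw [hSym T hT v (Q v)]
      have hc2' : c2 = inner ℂ v (T (Q v)) := hc2
      rw [← hc2', Complex.conj_I]
      have hc1' : c1 = inner ℂ v (Q v) := hc1
      rw [← hc1']
      ring
    have hc1im : c1.im = 0 := hreal Q hQ v
    have hc2im : c2.im = 0 := hreal _ hTQ v
    have hre : (inner ℂ u (A u) : ℂ).re = c1.re := by
      rw [hz]; simp [Complex.sub_re, Complex.mul_re, hc2im]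
    have him : (inner ℂ u (A u) : ℂ).im = -c2.re := by
      rw [hz]; simp [Complex.sub_im, Complex.mul_im, hc1im, hc2im]
    -- c1.re = ‖S v‖ ^ 2
    have hc1re : c1.re = ‖S v‖ ^ 2 := by
      have : c1 = inner ℂ (S v) (S v) := by
        rw [hc1, ← hS2]
        rw [show ((S * S) v) = S (S v) from rfl, ← hSym S hSsa v (S v)]
      rw [this, inner_self_eq_norm_sq_to_K]
      norm_cast
    -- c2 = ⟪S v, T (S v)⟫
    have hc2eq : c2 = inner ℂ (S v) (T (S v)) := by
      rw [hc2, ← hS2]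
      have h1 : (T * (S * S)) v = S (T (S v)) := by
        rw [← mul_assoc, hTS]
        rfl
      rw [h1, ← hSym S hSsa v (T (S v))]
    have hbound : |c2.re| ≤ ‖T‖ * c1.re := by
      have h1 : |c2.re| ≤ ‖c2‖ := Complex.abs_re_le_norm c2
      have h2 : ‖c2‖ ≤ ‖S v‖ * ‖T (S v)‖ := by
        rw [hc2eq]
        exact norm_inner_le_norm (𝕜 := ℂ) (S v) (T (S v))
      have h3 : ‖T (S v)‖ ≤ ‖T‖ * ‖S v‖ := T.le_opNorm (S v)
      have h4 : ‖S v‖ * ‖T (S v)‖ ≤ ‖S v‖ * (‖T‖ * ‖S v‖) :=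
        mul_le_mul_of_nonneg_left h3 (norm_nonneg _)
      rw [hc1re]
      calc |c2.re| ≤ ‖S v‖ * (‖T‖ * ‖S v‖) := le_trans h1 (le_trans h2 h4)
        _ = ‖T‖ * ‖S v‖ ^ 2 := by ring
    constructor
    · rw [hre]; exact hQnn v
    · rw [hre, him, abs_neg]; exact hbound
  refine ⟨part1, part2, ?_⟩
  -- Part 3: sector membership
  intro u
  obtain ⟨hre, him⟩ := part2 u
  set z : ℂ := inner ℂ u (A u) with hz_def
  by_cases hz0 : z = 0
  · exact Or.inl hz0
  · right
    have hrepos : 0 < z.re := by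
      rcases lt_or_eq_of_le hre with h | h
      · exact h
      · exfalso
        apply hz0
        have him0 : z.im = 0 := by
          have him2 := him
          rw [← h, mul_zero] at him2
          exact abs_eq_zero.mp (le_antisymm him2 (abs_nonneg _))
        apply Complex.ext
        · simp [h.symm]
        · simp [him0]
    have harg : z.arg = Real.arctan (z.im / z.re) := by
      have h1 : |z.arg| < Real.pi / 2 :=
        Complex.abs_arg_lt_pi_div_two_iff.mpr (Or.inl hrepos)
      rw [← Complex.tan_arg z, Real.arctan_tan (by linarith [abs_lt.mp h1 |>.1])
        (by linarith [abs_lt.mp h1 |>.2])]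
    have hq : |z.im / z.re| ≤ ‖T‖ := by
      rw [abs_div, abs_of_pos hrepos, div_le_iff₀ hrepos]
      exact him
    rw [harg, abs_le]
    obtain ⟨hq1, hq2⟩ := abs_le.mp hq
    constructor
    · rw [← Real.arctan_neg]
      exact Real.arctan_strictMono.monotone (by linarith)
    · exact Real.arctan_strictMono.monotone hq2
end

section
/- Let V be a complex Hilbert space and T, Q bounded selfadjoint operators on V with Q nonnegative and injective. Then there exists a positive invertible operator S on V such that QS(I + iT) is accretive if and only if the operator C := (I − Q + iT)(I + Q + iT)⁻¹ is similar to a contraction. -/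
set_option synthInstance.maxHeartbeats 1000000
set_option maxHeartbeats 1000000

open ContinuousLinearMap

section Aux

variable {V : Type*} [NormedAddCommGroup V] [InnerProductSpace ℂ V] [CompleteSpace V]

private lemma re_inner_self (x : V) : (inner ℂ x x : ℂ).re = ‖x‖ ^ 2 := by
  have h := inner_self_eq_norm_sq (𝕜 := ℂ) x
  simpa [RCLike.re_to_complex] using h

private lemma sa_inner_flip (S : V →L[ℂ] V) (hS : IsSelfAdjoint S) (x y : V) :
    (inner ℂ x (S y) : ℂ) = starRingEnd ℂ (inner ℂ y (S x) : ℂ) := by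
  conv_lhs => rw [← hS.adjoint_eq]
  rw [adjoint_inner_right, ← inner_conj_symm]

private lemma re_sa_inner_flip (S : V →L[ℂ] V) (hS : IsSelfAdjoint S) (x y : V) :
    (inner ℂ x (S y) : ℂ).re = (inner ℂ y (S x) : ℂ).re := by
  rw [sa_inner_flip S hS, Complex.conj_re]

private lemma coercive_isUnit_s9 (X : V →L[ℂ] V) {c : ℝ} (hc : 0 < c)
    (h : ∀ u : V, c * ‖u‖ ^ 2 ≤ (inner ℂ u (X u) : ℂ).re) : IsUnit X := by
  refine isUnit_of_forall_le_norm_inner_map X (c := ⟨c, hc.le⟩) (by exact_mod_cast hc) ?_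
  intro x
  calc ‖x‖ ^ 2 * ((⟨c, hc.le⟩ : NNReal) : ℝ) = c * ‖x‖ ^ 2 := by
        simp [mul_comm]
    _ ≤ (inner ℂ x (X x) : ℂ).re := h x
    _ ≤ ‖(inner ℂ x (X x) : ℂ)‖ := by
        exact Complex.re_le_norm _
    _ = ‖(inner ℂ (X x) x : ℂ)‖ := norm_inner_symm _ _

private lemma quad_key (S : V →L[ℂ] V) (hS : IsSelfAdjoint S) (a b : V) :
    (inner ℂ (a + b + b) (S (a + b + b)) : ℂ).re
      = (inner ℂ a (S a) : ℂ).re + 4 * (inner ℂ b (S (a + b)) : ℂ).re := by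
  have hab := re_sa_inner_flip S hS a b
  simp only [map_add, inner_add_left, inner_add_right, Complex.add_re]
  rw [hab]
  ring

private lemma quad_identity (T Q S : V →L[ℂ] V) (hQ : IsSelfAdjoint Q)
    (hS : IsSelfAdjoint S) (u : V) :
    4 * (inner ℂ u ((Q * S * ((1 : V →L[ℂ] V) + Complex.I • T)) u) : ℂ).re
      = (inner ℂ (((1 : V →L[ℂ] V) + Q + Complex.I • T) u)
            (S (((1 : V →L[ℂ] V) + Q + Complex.I • T) u)) : ℂ).re
        - (inner ℂ (((1 : V →L[ℂ] V) - Q + Complex.I • T) u)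
            (S (((1 : V →L[ℂ] V) - Q + Complex.I • T) u)) : ℂ).re := by
  set a := ((1 : V →L[ℂ] V) - Q + Complex.I • T) u with ha
  set b := Q u with hb
  have h1 : ((1 : V →L[ℂ] V) + Q + Complex.I • T) u = a + b + b := by
    simp only [ha, hb, add_apply, sub_apply, one_apply, smul_apply]
    abel
  have h2 : ((1 : V →L[ℂ] V) + Complex.I • T) u = a + b := by
    simp only [ha, hb, add_apply, sub_apply, one_apply, smul_apply]
    abel
  have h3 : (inner ℂ u ((Q * S * ((1 : V →L[ℂ] V) + Complex.I • T)) u) : ℂ)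
      = inner ℂ b (S (a + b)) := by
    have hmul : (Q * S * ((1 : V →L[ℂ] V) + Complex.I • T)) u
        = Q (S (((1 : V →L[ℂ] V) + Complex.I • T) u)) := rfl
    rw [hmul, h2, ← adjoint_inner_left, hQ.adjoint_eq]
  rw [h1, h3, quad_key S hS a b]
  ring

private lemma inner_star_mul (R : V →L[ℂ] V) (x : V) :
    (inner ℂ x ((star R * R) x) : ℂ) = inner ℂ (R x) (R x) := by
  have h : (star R * R) x = adjoint R (R x) := by rw [star_eq_adjoint]; rfl
  rw [h, adjoint_inner_right]

end Aux

/-- An operator `S` is positive and invertible if it is selfadjoint and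
`⟨Su, u⟩ ≥ η‖u‖²` for some `η > 0`. -/
def PosInvertible {V : Type*} [NormedAddCommGroup V] [InnerProductSpace ℂ V]
    [CompleteSpace V] (S : V →L[ℂ] V) : Prop :=
  IsSelfAdjoint S ∧ ∃ η > (0 : ℝ), ∀ u : V, η * ‖u‖ ^ 2 ≤ (inner ℂ u (S u) : ℂ).re

/-- Let `V` be a complex Hilbert space and `T, Q` bounded selfadjoint
operators on `V` with `Q` nonnegative and injective. Then there exists a positive
invertible operator `S` on `V` such that `QS(I + iT)` is accretive if and only if the
operator `C := (I − Q + iT)(I + Q + iT)⁻¹` is similar to a contraction. -/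
theorem accretive_exists_iff_similar_contraction
    {V : Type*} [NormedAddCommGroup V] [InnerProductSpace ℂ V] [CompleteSpace V]
    (T Q : V →L[ℂ] V) (hT : IsSelfAdjoint T) (hQ : IsSelfAdjoint Q)
    (hQnn : ∀ u : V, 0 ≤ (inner ℂ u (Q u) : ℂ).re) (hQinj : Function.Injective Q)
    (C : V →L[ℂ] V)
    (hC : C = ((1 : V →L[ℂ] V) - Q + Complex.I • T) *
      Ring.inverse ((1 : V →L[ℂ] V) + Q + Complex.I • T)) :
    (∃ S : V →L[ℂ] V, PosInvertible S ∧
      ∀ u : V, 0 ≤ (inner ℂ u ((Q * S * ((1 : V →L[ℂ] V) + Complex.I • T)) u) : ℂ).re) ↔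
    (∃ R : V →L[ℂ] V, IsUnit R ∧ ‖R * C * Ring.inverse R‖ ≤ 1) := by
  set D : V →L[ℂ] V := (1 : V →L[ℂ] V) + Q + Complex.I • T with hDdef
  set N : V →L[ℂ] V := (1 : V →L[ℂ] V) - Q + Complex.I • T with hNdef
  -- The imaginary part of ⟪u, T u⟫ vanishes since `T` is selfadjoint.
  have hTim : ∀ u : V, (inner ℂ u (T u) : ℂ).im = 0 := by
    intro u
    have h := sa_inner_flip T hT u u
    exact Complex.conj_eq_iff_im.mp h.symm
  -- D is coercive, hence invertible.
  have hDcoer : ∀ u : V, 1 * ‖u‖ ^ 2 ≤ (inner ℂ u (D u) : ℂ).re := by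
    intro u
    have hDu : D u = u + Q u + Complex.I • T u := rfl
    rw [hDu, inner_add_right, inner_add_right, inner_smul_right, Complex.add_re,
      Complex.add_re, Complex.mul_re, Complex.I_re, Complex.I_im, hTim u, re_inner_self]
    have := hQnn u
    simp only [zero_mul, one_mul, mul_zero]
    linarith
  have hDunit : IsUnit D := coercive_isUnit_s9 D one_pos hDcoer
  have hCD : C * D = N := by
    rw [hC, mul_assoc, Ring.inverse_mul_cancel _ hDunit, mul_one]
  constructor
  · -- Forward direction: accretive ⇒ similar to a contraction via R = √S.
    rintro ⟨S, ⟨hSsa, η, hη, hScoer⟩, hacc⟩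
    have hSunit : IsUnit S := coercive_isUnit_s9 S hη hScoer
    have hSpos : (0 : V →L[ℂ] V) ≤ S := by
      rw [ContinuousLinearMap.nonneg_iff_isPositive]
      refine ⟨hSsa.isSymmetric, fun x => ?_⟩
      have h1 := hScoer x
      have h2 : (0 : ℝ) ≤ (inner ℂ x (S x) : ℂ).re := le_trans (by positivity) h1
      have h3 : (inner ℂ (S x) x : ℂ).re = (inner ℂ x (S x) : ℂ).re := by
        rw [← inner_conj_symm x (S x)]
        exact Complex.conj_re _
      rw [ContinuousLinearMap.reApplyInnerSelf_apply]
      simpa [RCLike.re_to_complex, h3] using h2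
    set R : V →L[ℂ] V := CFC.sqrt S with hRdef
    have hRpos : (0 : V →L[ℂ] V) ≤ R := CFC.sqrt_nonneg S
    have hRsa : IsSelfAdjoint R := IsSelfAdjoint.of_nonneg hRpos
    have hRR : R * R = S := CFC.sqrt_mul_sqrt_self S hSpos
    -- R is invertible since R² = S is.
    have hcomm : R * S = S * R := by
      rw [← hRR, mul_assoc]
    have hinvcomm : Ring.inverse S * R = R * Ring.inverse S := by
      calc Ring.inverse S * R
          = Ring.inverse S * R * (S * Ring.inverse S) := by
            rw [Ring.mul_inverse_cancel _ hSunit, mul_one]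
        _ = Ring.inverse S * (R * S) * Ring.inverse S := by
            simp only [mul_assoc]
        _ = Ring.inverse S * (S * R) * Ring.inverse S := by rw [hcomm]
        _ = (Ring.inverse S * S) * (R * Ring.inverse S) := by
            simp only [mul_assoc]
        _ = R * Ring.inverse S := by
            rw [Ring.inverse_mul_cancel _ hSunit, one_mul]
    have hRunit : IsUnit R := by
      refine ⟨⟨R, R * Ring.inverse S, ?_, ?_⟩, rfl⟩
      · rw [← mul_assoc, hRR, Ring.mul_inverse_cancel _ hSunit]
      · rw [← hinvcomm, mul_assoc, hRR, Ring.inverse_mul_cancel _ hSunit]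
    -- ‖R x‖² = re ⟪x, S x⟫
    have hnormsq : ∀ x : V, ‖R x‖ ^ 2 = (inner ℂ x (S x) : ℂ).re := by
      intro x
      have h : (inner ℂ x (S x) : ℂ) = inner ℂ (R x) (R x) := by
        rw [← hRR]
        have hx : (R * R) x = R (R x) := rfl
        rw [hx, ← adjoint_inner_left, hRsa.adjoint_eq]
      rw [h, re_inner_self]
    -- key inequality: ‖R (C v)‖ ≤ ‖R v‖ for all v
    have hkey : ∀ v : V, ‖R (C v)‖ ≤ ‖R v‖ := by
      intro v
      obtain ⟨d, hd⟩ := hDunit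
      set w : V := (↑d⁻¹ : V →L[ℂ] V) v with hw
      have hDw : D w = v := by
        have : D * (↑d⁻¹ : V →L[ℂ] V) = 1 := by rw [← hd]; exact d.mul_inv
        calc D w = (D * (↑d⁻¹ : V →L[ℂ] V)) v := rfl
          _ = v := by rw [this]; rfl
      have hCv : C v = N w := by
        rw [← hDw]
        calc C (D w) = (C * D) w := rfl
          _ = N w := by rw [hCD]
      have hsq : ‖R (C v)‖ ^ 2 ≤ ‖R v‖ ^ 2 := by
        rw [hCv, ← hDw, hnormsq, hnormsq]
        have hid := quad_identity T Q S hQ hSsa w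
        have hge := hacc w
        rw [← hDdef, ← hNdef] at hid
        linarith
      exact (abs_le_of_sq_le_sq' hsq (norm_nonneg _)).2
    refine ⟨R, hRunit, ?_⟩
    refine ContinuousLinearMap.opNorm_le_bound _ zero_le_one fun u => ?_
    rw [one_mul]
    have happ : (R * C * Ring.inverse R) u = R (C (Ring.inverse R u)) := rfl
    rw [happ]
    calc ‖R (C (Ring.inverse R u))‖ ≤ ‖R (Ring.inverse R u)‖ := hkey _
      _ = ‖(R * Ring.inverse R) u‖ := rfl
      _ = ‖u‖ := by rw [Ring.mul_inverse_cancel _ hRunit]; rfl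
  · -- Backward direction: similarity ⇒ accretivity with S = R* R.
    rintro ⟨R, hRunit, hnorm⟩
    set S : V →L[ℂ] V := star R * R with hSdef
    have hnormsq : ∀ x : V, ‖R x‖ ^ 2 = (inner ℂ x (S x) : ℂ).re := by
      intro x
      rw [hSdef, inner_star_mul, re_inner_self]
    have hSsa : IsSelfAdjoint S := IsSelfAdjoint.star_mul_self R
    -- coercivity of S
    set m : ℝ := max ‖Ring.inverse R‖ 1 with hm
    have hm1 : (1 : ℝ) ≤ m := le_max_right _ _
    have hm0 : (0 : ℝ) < m := lt_of_lt_of_le one_pos hm1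
    have hlow : ∀ u : V, ‖u‖ ≤ m * ‖R u‖ := by
      intro u
      have h1 : Ring.inverse R (R u) = u := by
        have : (Ring.inverse R * R) u = u := by
          rw [Ring.inverse_mul_cancel _ hRunit]; rfl
        exact this
      calc ‖u‖ = ‖Ring.inverse R (R u)‖ := by rw [h1]
        _ ≤ ‖Ring.inverse R‖ * ‖R u‖ := ContinuousLinearMap.le_opNorm _ _
        _ ≤ m * ‖R u‖ := by
            apply mul_le_mul_of_nonneg_right (le_max_left _ _) (norm_nonneg _)
    have hScoer : ∀ u : V, m⁻¹ ^ 2 * ‖u‖ ^ 2 ≤ (inner ℂ u (S u) : ℂ).re := by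
      intro u
      rw [← hnormsq u]
      have h1 : m⁻¹ * ‖u‖ ≤ ‖R u‖ := by
        rw [inv_mul_le_iff₀ hm0]
        exact hlow u
      have h2 : (m⁻¹ * ‖u‖) ^ 2 ≤ ‖R u‖ ^ 2 := by
        apply pow_le_pow_left₀ (by positivity) h1
      calc m⁻¹ ^ 2 * ‖u‖ ^ 2 = (m⁻¹ * ‖u‖) ^ 2 := by ring
        _ ≤ ‖R u‖ ^ 2 := h2
    refine ⟨S, ⟨hSsa, m⁻¹ ^ 2, by positivity, hScoer⟩, fun u => ?_⟩
    -- accretivity from the contraction property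
    have hRN : ‖R (N u)‖ ≤ ‖R (D u)‖ := by
      have h1 : (R * C * Ring.inverse R) (R (D u)) = R (N u) := by
        have h2 : Ring.inverse R (R (D u)) = D u := by
          have : (Ring.inverse R * R) (D u) = D u := by
            rw [Ring.inverse_mul_cancel _ hRunit]; rfl
          exact this
        have h3 : (R * C * Ring.inverse R) (R (D u)) = R (C (Ring.inverse R (R (D u)))) := rfl
        rw [h3, h2]
        have h4 : C (D u) = (C * D) u := rfl
        rw [h4, hCD]
      calc ‖R (N u)‖ = ‖(R * C * Ring.inverse R) (R (D u))‖ := by rw [h1]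
        _ ≤ ‖R * C * Ring.inverse R‖ * ‖R (D u)‖ := ContinuousLinearMap.le_opNorm _ _
        _ ≤ 1 * ‖R (D u)‖ := by
            apply mul_le_mul_of_nonneg_right hnorm (norm_nonneg _)
        _ = ‖R (D u)‖ := one_mul _
    have hsq : ‖R (N u)‖ ^ 2 ≤ ‖R (D u)‖ ^ 2 :=
      pow_le_pow_left₀ (norm_nonneg _) hRN 2
    rw [hnormsq, hnormsq] at hsq
    have hid := quad_identity T Q S hQ hSsa u
    rw [← hDdef, ← hNdef] at hid
    linarith
end

section
/- Let V be a complex Hilbert space and T, Q bounded selfadjoint operators on V such that Q is positive and invertible, i.e. there exists η > 0 with ⟨Qu,u⟩ ≥ η‖u‖² for all u ∈ V. Then the operator C := (I − Q + iT)(I + Q + iT)⁻¹ is similar to a contraction. -/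
open scoped NNReal

open ContinuousLinearMap Complex

section Aux
variable {V : Type*} [NormedAddCommGroup V] [InnerProductSpace ℂ V] [CompleteSpace V]

local notation "⟪" x ", " y "⟫" => @inner ℂ _ _ x y

omit [CompleteSpace V] in
lemma bdd_of_coercive (M : V →L[ℂ] V) (c : ℝ)
    (h : ∀ u : V, c * ‖u‖ ^ 2 ≤ (⟪u, M u⟫).re) : ∀ u : V, c * ‖u‖ ≤ ‖M u‖ := by
  intro u
  rcases eq_or_ne u 0 with rfl | hu
  · simp
  · have h1 := h u
    have h2 : (⟪u, M u⟫).re ≤ ‖(⟪u, M u⟫ : ℂ)‖ := by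
      simpa using Complex.re_le_norm _
    have h3 : ‖(⟪u, M u⟫ : ℂ)‖ ≤ ‖u‖ * ‖M u‖ := norm_inner_le_norm u (M u)
    have hn : 0 < ‖u‖ := norm_pos_iff.mpr hu
    nlinarith

lemma isUnit_of_coercive (M : V →L[ℂ] V) (c : ℝ) (hc : 0 < c)
    (h : ∀ u : V, c * ‖u‖ ^ 2 ≤ (⟪u, M u⟫).re) : IsUnit M := by
  have hadj : ∀ u : V, c * ‖u‖ ^ 2 ≤ (⟪u, adjoint M u⟫).re := by
    intro u
    have h5 : (⟪u, adjoint M u⟫).re = (⟪M u, u⟫).re := by rw [adjoint_inner_right]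
    have h6 : (⟪M u, u⟫).re = (⟪u, M u⟫).re := by
      conv_lhs => rw [← inner_conj_symm]
      exact Complex.conj_re _
    rw [h5, h6]; exact h u
  have hb := bdd_of_coercive M c h
  have hb' := bdd_of_coercive (adjoint M) c hadj
  have key : ∀ x : V, ‖x‖ ≤ (c.toNNReal⁻¹ : ℝ≥0) * ‖M x‖ := by
    intro x
    have hcv : ((c.toNNReal⁻¹ : ℝ≥0) : ℝ) = c⁻¹ := by
      simp [Real.toNNReal_of_nonneg hc.le]
    rw [hcv, inv_mul_eq_div, le_div_iff₀ hc]
    linarith [hb x]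
  have hanti : AntilipschitzWith c.toNNReal⁻¹ M := M.antilipschitz_of_bound key
  have hclosed : IsClosed (Set.range M) := hanti.isClosed_range M.uniformContinuous
  have hker : LinearMap.ker (M : V →ₗ[ℂ] V) = ⊥ := by
    rw [LinearMap.ker_eq_bot']
    intro u hu
    have := hb u
    rw [show M u = 0 from hu, norm_zero] at this
    have : ‖u‖ ≤ 0 := by nlinarith [norm_nonneg u]
    simpa using le_antisymm this (norm_nonneg u)
  have hrangeset : (LinearMap.range (M : V →ₗ[ℂ] V) : Set V) = Set.range M := by
    ext y; simp [LinearMap.mem_range]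
  have hclosed' : IsClosed ((LinearMap.range (M : V →ₗ[ℂ] V) : Submodule ℂ V) : Set V) := by
    rw [hrangeset]; exact hclosed
  haveI : CompleteSpace (LinearMap.range (M : V →ₗ[ℂ] V) : Submodule ℂ V) := hclosed'.completeSpace_coe
  have hrange : LinearMap.range (M : V →ₗ[ℂ] V) = ⊤ := by
    rw [← Submodule.orthogonal_eq_bot_iff, Submodule.eq_bot_iff]
    intro v hv
    have hMv : adjoint M v = 0 := by
      have h0 : ⟪M (adjoint M v), v⟫ = 0 := hv _ ⟨adjoint M v, rfl⟩
      have hcj : ⟪v, M (adjoint M v)⟫ = 0 := by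
        rw [← inner_conj_symm, h0, map_zero]
      have : ⟪adjoint M v, adjoint M v⟫ = 0 := by
        rw [adjoint_inner_left]; exact hcj
      exact inner_self_eq_zero.mp this
    have := hb' v
    rw [hMv, norm_zero] at this
    have : ‖v‖ ≤ 0 := by nlinarith [norm_nonneg v]
    simpa using le_antisymm this (norm_nonneg v)
  let e := ContinuousLinearEquiv.ofBijective M hker hrange
  exact ⟨⟨M, e.symm.toContinuousLinearMap,
      by ext x; simp [e, ContinuousLinearMap.mul_apply],
      by ext x; simp [e, ContinuousLinearMap.mul_apply]⟩, rfl⟩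

end Aux

/-- Let `V` be a complex Hilbert space and `T, Q` bounded selfadjoint
operators on `V` such that `Q` is positive and invertible, i.e. there exists `η > 0`
with `⟨Qu, u⟩ ≥ η‖u‖²` for all `u ∈ V`. Then the operator
`C := (I − Q + iT)(I + Q + iT)⁻¹` is similar to a contraction. -/
theorem cayley_similar_contraction_of_invertible_Q
    {V : Type*} [NormedAddCommGroup V] [InnerProductSpace ℂ V] [CompleteSpace V]
    (T Q : V →L[ℂ] V) (hT : IsSelfAdjoint T) (hQ : IsSelfAdjoint Q)
    (hQpos : ∃ η > (0 : ℝ), ∀ u : V, η * ‖u‖ ^ 2 ≤ (inner ℂ u (Q u) : ℂ).re)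
    (C : V →L[ℂ] V)
    (hC : C = ((1 : V →L[ℂ] V) - Q + Complex.I • T) *
      Ring.inverse ((1 : V →L[ℂ] V) + Q + Complex.I • T)) :
    ∃ R : V →L[ℂ] V, IsUnit R ∧ ‖R * C * Ring.inverse R‖ ≤ 1 := by
  obtain ⟨η, hη, hco⟩ := hQpos
  set A : V →L[ℂ] V := (1 : V →L[ℂ] V) + Q + Complex.I • T with hAdef
  set B : V →L[ℂ] V := (1 : V →L[ℂ] V) - Q + Complex.I • T with hBdef
  set S : V →L[ℂ] V := (1 : V →L[ℂ] V) + Complex.I • T with hSdef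
  have hTsym := ContinuousLinearMap.isSelfAdjoint_iff_isSymmetric.mp hT
  have hTreal : ∀ u : V, (inner ℂ u (T u) : ℂ).im = 0 := by
    intro u
    have h1 : (inner ℂ (T u) u : ℂ) = inner ℂ u (T u) := hTsym u u
    have h2 : (starRingEnd ℂ) (inner ℂ u (T u) : ℂ) = inner ℂ (T u) u := inner_conj_symm _ _
    have := h2.trans h1
    exact Complex.conj_eq_iff_im.mp this
  -- A is a unit
  have hAco : ∀ u : V, (1 : ℝ) * ‖u‖ ^ 2 ≤ (inner ℂ u (A u) : ℂ).re := by
    intro u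
    have hAu : A u = u + Q u + Complex.I • T u := by
      simp [hAdef, ContinuousLinearMap.add_apply]
    rw [hAu]
    rw [inner_add_right, inner_add_right, inner_smul_right]
    have hself : (inner ℂ u u : ℂ).re = ‖u‖ ^ 2 := by
      rw [← RCLike.re_to_complex]; exact inner_self_eq_norm_sq u
    have hIT : (Complex.I * (inner ℂ u (T u) : ℂ)).re = 0 := by
      simp [Complex.mul_re, hTreal u]
    have hQre := hco u
    simp only [Complex.add_re]
    rw [hself, hIT]
    nlinarith [hco u, sq_nonneg ‖u‖]
  have hAu : IsUnit A := isUnit_of_coercive A 1 one_pos hAco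
  -- Q is a unit
  have hQu : IsUnit Q := isUnit_of_coercive Q η hη hco
  -- spectrum of Q is contained in [η, ∞)
  have hspec : spectrum ℝ Q ⊆ Set.Ici η := by
    intro lam hlam
    by_contra hlt
    rw [Set.mem_Ici, not_le] at hlt
    have hcoer : ∀ u : V, (η - lam) * ‖u‖ ^ 2 ≤
        (inner ℂ u ((Q - algebraMap ℝ (V →L[ℂ] V) lam) u) : ℂ).re := by
      intro u
      have halg : (algebraMap ℝ (V →L[ℂ] V) lam) u = (lam : ℂ) • u := by
        rw [Algebra.algebraMap_eq_smul_one]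
        simp [ContinuousLinearMap.smul_apply]
      rw [ContinuousLinearMap.sub_apply, halg, inner_sub_right, inner_smul_right]
      have hself : (inner ℂ u u : ℂ).re = ‖u‖ ^ 2 := by
        rw [← RCLike.re_to_complex]; exact inner_self_eq_norm_sq u
      have him : (inner ℂ u u : ℂ).im = 0 := by
        rw [← RCLike.im_to_complex]; exact inner_self_im (𝕜 := ℂ) u
      have : ((lam : ℂ) * (inner ℂ u u : ℂ)).re = lam * ‖u‖ ^ 2 := by
        rw [Complex.mul_re, him, hself]; simp
      rw [Complex.sub_re, this]
      have := hco u
      linarith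
    have hUnit : IsUnit (Q - algebraMap ℝ (V →L[ℂ] V) lam) :=
      isUnit_of_coercive _ (η - lam) (by linarith) hcoer
    have : IsUnit (algebraMap ℝ (V →L[ℂ] V) lam - Q) := by
      rw [← neg_sub]; exact hUnit.neg
    exact (spectrum.mem_iff.mp hlam) this
  -- square root of Q
  set P : V →L[ℂ] V := cfc Real.sqrt Q with hPdef
  have hPsa : IsSelfAdjoint P := cfc_predicate _ _
  have hPP : P * P = Q := by
    rw [hPdef, ← cfc_mul Real.sqrt Real.sqrt Q
      Real.continuous_sqrt.continuousOn Real.continuous_sqrt.continuousOn]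
    have : cfc (fun x => Real.sqrt x * Real.sqrt x) Q = cfc (fun x : ℝ => x) Q :=
      cfc_congr fun x hx => Real.mul_self_sqrt (le_trans hη.le (hspec hx))
    rw [this, cfc_id' ℝ Q]
  -- P is a unit
  have hcommPQ : P * Q = Q * P := by
    rw [← hPP, mul_assoc]
  set Qinv : V →L[ℂ] V := Ring.inverse Q with hQinvdef
  have hQQinv : Q * Qinv = 1 := Ring.mul_inverse_cancel Q hQu
  have hQinvQ : Qinv * Q = 1 := Ring.inverse_mul_cancel Q hQu
  have hcommPQinv : P * Qinv = Qinv * P := by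
    have h1 : Qinv * (Q * P) * Qinv = P * Qinv := by
      rw [← mul_assoc Qinv Q P, hQinvQ, one_mul]
    have h2 : Qinv * (P * Q) * Qinv = Qinv * P := by
      rw [mul_assoc Qinv (P * Q) Qinv, mul_assoc P Q Qinv, hQQinv, mul_one]
    rw [← h1, ← hcommPQ, h2]
  have hPu : IsUnit P := by
    refine ⟨⟨P, P * Qinv, ?_, ?_⟩, rfl⟩
    · rw [← mul_assoc, hPP, hQQinv]
    · rw [hcommPQinv, mul_assoc, hPP, hQinvQ]
  set R : V →L[ℂ] V := Ring.inverse P with hRdef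
  have hPR : P * R = 1 := Ring.mul_inverse_cancel P hPu
  have hRP : R * P = 1 := Ring.inverse_mul_cancel P hPu
  have hRu : IsUnit R := ⟨⟨R, P, hRP, hPR⟩, rfl⟩
  have hRsa : IsSelfAdjoint R := by
    have h1 : P * star R = 1 := by
      have := congrArg star hRP
      rwa [star_mul, hPsa.star_eq, star_one] at this
    calc star R = (R * P) * star R := by rw [hRP, one_mul]
    _ = R * (P * star R) := by rw [mul_assoc]
    _ = R := by rw [h1, mul_one]
  have hRsym := ContinuousLinearMap.isSelfAdjoint_iff_isSymmetric.mp hRsa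
  have hRRinv : Ring.inverse R = P := by
    calc Ring.inverse R = Ring.inverse R * (R * P) := by rw [hRP, mul_one]
    _ = (Ring.inverse R * R) * P := by rw [mul_assoc]
    _ = P := by rw [Ring.inverse_mul_cancel R hRu, one_mul]
  refine ⟨R, hRu, ?_⟩
  rw [hRRinv, hC]
  set Ainv : V →L[ℂ] V := Ring.inverse A with hAinvdef
  have hAAinv : A * Ainv = 1 := Ring.mul_inverse_cancel A hAu
  have hAinvA : Ainv * A = 1 := Ring.inverse_mul_cancel A hAu
  apply ContinuousLinearMap.opNorm_le_bound _ zero_le_one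
  intro x
  set u : V := Ainv (P x) with hu
  have hAux : A u = P x := by
    rw [hu, ← ContinuousLinearMap.mul_apply, hAAinv, ContinuousLinearMap.one_apply]
  have hxR : x = R (A u) := by
    rw [hAux, ← ContinuousLinearMap.mul_apply, hRP, ContinuousLinearMap.one_apply]
  have hLHS : (R * (B * Ainv) * P) x = R (B u) := by
    simp [ContinuousLinearMap.mul_apply, hu]
  rw [hLHS]
  -- decompose
  have hQapp : ∀ v : V, Q v = P (P v) := by
    intro v; rw [← hPP]; rfl
  have hRQ : ∀ v : V, R (Q v) = P v := by
    intro v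
    rw [hQapp, ← ContinuousLinearMap.mul_apply R P, hRP, ContinuousLinearMap.one_apply]
  have hBu : R (B u) = R (S u) - P u := by
    have : B u = S u - Q u := by
      simp [hBdef, hSdef, ContinuousLinearMap.add_apply, ContinuousLinearMap.sub_apply]
      abel
    rw [this, map_sub, hRQ]
  have hAu2 : R (A u) = R (S u) + P u := by
    have : A u = S u + Q u := by
      simp [hAdef, hSdef, ContinuousLinearMap.add_apply]
      abel
    rw [this, map_add, hRQ]
  -- inner product computation
  have hip : (inner ℂ (R (S u)) (P u) : ℂ).re = ‖u‖ ^ 2 := by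
    have h1 : (inner ℂ (R (S u)) (P u) : ℂ) = inner ℂ (S u) (R (P u)) := hRsym _ _
    have h2 : R (P u) = u := by
      rw [← ContinuousLinearMap.mul_apply, hRP, ContinuousLinearMap.one_apply]
    rw [h1, h2]
    have hSu : S u = u + Complex.I • T u := by
      simp [hSdef, ContinuousLinearMap.add_apply]
    rw [hSu, inner_add_left, inner_smul_left]
    have hself : (inner ℂ u u : ℂ).re = ‖u‖ ^ 2 := by
      rw [← RCLike.re_to_complex]; exact inner_self_eq_norm_sq u
    have hIT : ((starRingEnd ℂ) Complex.I * (inner ℂ (T u) u : ℂ)).re = 0 := by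
      have him : (inner ℂ (T u) u : ℂ).im = 0 := by
        have : (inner ℂ (T u) u : ℂ) = inner ℂ u (T u) := hTsym u u
        rw [this]
        exact hTreal u
      simp [Complex.mul_re, him]
    rw [Complex.add_re, hself, hIT, add_zero]
  -- conclude
  have hnorms : ‖R (S u) - P u‖ ≤ ‖R (S u) + P u‖ := by
    have e1 := norm_add_sq (𝕜 := ℂ) (R (S u)) (P u)
    have e2 := norm_sub_sq (𝕜 := ℂ) (R (S u)) (P u)
    have hre : RCLike.re (inner ℂ (R (S u)) (P u) : ℂ) = ‖u‖ ^ 2 := hip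
    nlinarith [norm_nonneg (R (S u) - P u), norm_nonneg (R (S u) + P u), sq_nonneg ‖u‖,
      sq_nonneg (‖R (S u) - P u‖ + ‖R (S u) + P u‖)]
  rw [hBu]
  calc ‖R (S u) - P u‖ ≤ ‖R (S u) + P u‖ := hnorms
  _ = ‖x‖ := by rw [← hAu2, ← hxR]
  _ = 1 * ‖x‖ := (one_mul _).symm
end
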